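/- arXiv:0704.2931 — 15 statements merged into one kernel-verified Lean document; each statement's English description precedes it below -/
import Mathlib

section
/- Let n be a finite type with decidable equality, and let A, B : Matrix n n ℝ with A positive definite and B symmetric. Then there exists an invertible matrix P : Matrix n n ℝ and a vector d : n → ℝ such that Pᵀ * A * P = 1 and Pᵀ * B * P = Matrix.diagonal d, and moreover for every i the value d i is a root of the pencil polynomial det(X • A.map C − B.map C) ∈ ℝ[X]. (Weierstrass 1858: a pair of real quadratic forms (Φ, Ψ) with Φ definite can be simultaneously transformed into Σᵢ Xᵢ² and Σᵢ dᵢ Xᵢ², regardless of whether the roots of the pencil determinant are distinct.) -/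
open Polynomial Matrix

theorem weierstrass_simultaneous_diagonalization
    {n : Type*} [Fintype n] [DecidableEq n]
    (A B : Matrix n n ℝ) (hA : A.PosDef) (hB : B.IsSymm) :
    ∃ (P : Matrix n n ℝ) (d : n → ℝ), IsUnit P.det ∧
      Pᵀ * A * P = 1 ∧ Pᵀ * B * P = Matrix.diagonal d ∧
      ∀ i, (Matrix.det ((X : ℝ[X]) • A.map C - B.map C)).IsRoot (d i) := by
  have hAsd : A.PosSemidef := hA.posSemidef
  set S : Matrix n n ℝ := (open scoped MatrixOrder in CFC.sqrt A) with hSdef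
  have hSsd : S.PosSemidef := (open scoped MatrixOrder in (CFC.sqrt_nonneg A).posSemidef)
  have hSsymm : Sᵀ = S := hSsd.1
  have hSS : S * S = A := (open scoped MatrixOrder in CFC.sqrt_mul_sqrt_self A hAsd.nonneg)
  have hdetS : S.det ≠ 0 := by
    intro h
    have : A.det = 0 := by rw [← hSS, det_mul, h, mul_zero]
    exact hA.det_pos.ne' this
  have hSunit : IsUnit S.det := isUnit_iff_ne_zero.mpr hdetS
  have hSinvsymm : (S⁻¹)ᵀ = S⁻¹ := by rw [transpose_nonsing_inv, hSsymm]
  set M : Matrix n n ℝ := S⁻¹ * B * S⁻¹ with hMdef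
  have hM : M.IsHermitian := by
    have hMT : Mᵀ = M := by
      rw [hMdef, transpose_mul, transpose_mul, hSinvsymm, hB.eq, mul_assoc]
    rw [Matrix.IsHermitian, conjTranspose_eq_transpose_of_trivial, hMT]
  set U : Matrix n n ℝ := (hM.eigenvectorUnitary : Matrix n n ℝ) with hUdef
  have hUstar : star U * U = 1 := Unitary.coe_star_mul_self hM.eigenvectorUnitary
  have hUT : star U = Uᵀ := by
    rw [star_eq_conjTranspose, conjTranspose_eq_transpose_of_trivial]
  set d : n → ℝ := hM.eigenvalues with hddef
  have hspec : star U * M * U = Matrix.diagonal d := by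
    have := hM.conjStarAlgAut_star_eigenvectorUnitary
    simpa [Unitary.conjStarAlgAut_star_apply] using this
  have hdetU : U.det ≠ 0 := by
    intro h
    have : (star U * U).det = 0 := by rw [det_mul, h, mul_zero]
    rw [hUstar, det_one] at this
    exact one_ne_zero this
  set P : Matrix n n ℝ := S⁻¹ * U with hPdef
  have hPdet : IsUnit P.det := by
    rw [hPdef, det_mul]
    exact (isUnit_nonsing_inv_det S hSunit).mul (isUnit_iff_ne_zero.mpr hdetU)
  have hPA : Pᵀ * A * P = 1 := by
    rw [hPdef, transpose_mul, hSinvsymm, ← hUT, ← hSS]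
    simp only [Matrix.mul_assoc]
    rw [Matrix.mul_nonsing_inv_cancel_left _ _ hSunit,
      Matrix.nonsing_inv_mul_cancel_left _ _ hSunit, hUstar]
  have hPB : Pᵀ * B * P = Matrix.diagonal d := by
    rw [hPdef, transpose_mul, hSinvsymm, ← hUT, ← hspec, hMdef]
    simp only [Matrix.mul_assoc]
  refine ⟨P, d, hPdet, hPA, hPB, ?_⟩
  intro i
  have hmap : ((X : ℝ[X]) • A.map C - B.map C).map (evalRingHom (d i)) = d i • A - B := by
    ext j k
    simp only [Matrix.map_apply, Matrix.sub_apply, Matrix.smul_apply, smul_eq_mul,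
      map_sub, eval_mul, eval_X, eval_C, coe_evalRingHom, eval_sub]
  have heval : Polynomial.eval (d i) (Matrix.det ((X : ℝ[X]) • A.map C - B.map C))
      = Matrix.det (d i • A - B) := by
    have h := RingHom.map_det (evalRingHom (d i)) ((X : ℝ[X]) • A.map C - B.map C)
    rw [RingHom.mapMatrix_apply, hmap] at h
    simpa [coe_evalRingHom] using h
  have key : Matrix.det (d i • A - B) = 0 := by
    have hconj : Pᵀ * (d i • A - B) * P = Matrix.diagonal (fun j => d i - d j) := by
      rw [Matrix.mul_sub, Matrix.sub_mul, Matrix.mul_smul, Matrix.smul_mul, hPA, hPB]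
      ext j k
      by_cases h : j = k <;> simp [Matrix.diagonal, h, Matrix.sub_apply, Matrix.one_apply]
    have hdet0 : ((Pᵀ * (d i • A - B) * P)).det = 0 := by
      rw [hconj, det_diagonal]
      exact Finset.prod_eq_zero (Finset.mem_univ i) (by simp)
    rw [det_mul, det_mul, det_transpose] at hdet0
    rcases mul_eq_zero.mp hdet0 with h | h
    · rcases mul_eq_zero.mp h with h' | h'
      · exact absurd h' hPdet.ne_zero
      · exact h'
    · exact absurd h hPdet.ne_zero
  rw [Polynomial.IsRoot, heval, key]
end

section
/- Let n be a finite type with decidable equality, A, B : Matrix n n ℝ with A positive definite and B symmetric, and let p := det(X • A.map C − B.map C) ∈ ℝ[X] be the pencil polynomial. Then every complex root of p is real: for all z : ℂ, if Polynomial.aeval z p = 0 then z.im = 0. (Weierstrass 1858: the determinant of s·Φ − Ψ, for Φ a definite real quadratic form and Ψ a real quadratic form, vanishes only at real values of s.) -/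
open Polynomial Matrix

lemma herm_dot_real {n : Type*} [Fintype n] (M : Matrix n n ℂ)
    (hM : M.IsHermitian) (v : n → ℂ) : (star v ⬝ᵥ M *ᵥ v).im = 0 := by
  have h : star (star v ⬝ᵥ M *ᵥ v) = star v ⬝ᵥ M *ᵥ v := by
    calc star (star v ⬝ᵥ M *ᵥ v) = star (M *ᵥ v) ⬝ᵥ v := by
          rw [star_dotProduct, star_star]
      _ = (star v ᵥ* Mᴴ) ⬝ᵥ v := by rw [star_mulVec]
      _ = star v ⬝ᵥ M *ᵥ v := by rw [hM.eq, ← dotProduct_mulVec]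
  exact Complex.conj_eq_iff_im.mp h

lemma real_dot_re {n : Type*} [Fintype n] (S : Matrix n n ℝ) (v : n → ℂ) :
    (star v ⬝ᵥ (S.map ((↑) : ℝ → ℂ)) *ᵥ v).re =
      (fun i => (v i).re) ⬝ᵥ S *ᵥ (fun i => (v i).re) +
      (fun i => (v i).im) ⬝ᵥ S *ᵥ (fun i => (v i).im) := by
  simp only [dotProduct, mulVec, Finset.mul_sum, Complex.re_sum, Matrix.map_apply,
    Pi.star_apply]
  rw [← Finset.sum_add_distrib]
  refine Finset.sum_congr rfl fun i _ => ?_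
  rw [← Finset.sum_add_distrib]
  refine Finset.sum_congr rfl fun j _ => ?_
  simp [Complex.mul_re, Complex.mul_im]

theorem pencil_roots_real
    {n : Type*} [Fintype n] [DecidableEq n]
    (A B : Matrix n n ℝ) (hA : A.PosDef) (hB : B.IsSymm) :
    ∀ z : ℂ,
      Polynomial.aeval z (Matrix.det ((X : ℝ[X]) • A.map C - B.map C)) = 0 →
      z.im = 0 := by
  intro z hz
  set M : Matrix n n ℂ := z • A.map ((↑) : ℝ → ℂ) - B.map ((↑) : ℝ → ℂ) with hMdef
  have hdet : M.det = 0 := by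
    have h1 : (aeval z) (((X : ℝ[X]) • A.map C - B.map C).det)
        = ((((X : ℝ[X]) • A.map C - B.map C)).map (aeval z)).det :=
      RingHom.map_det ((aeval z : ℝ[X] →ₐ[ℝ] ℂ) : ℝ[X] →+* ℂ) _
    rw [h1] at hz
    rw [← hz]
    congr 1
    ext i j
    simp [hMdef, Matrix.map_apply, smul_eq_mul, Complex.coe_algebraMap]
    ring
  obtain ⟨v, hv0, hvm⟩ := (Matrix.exists_mulVec_eq_zero_iff).mpr hdet
  set a : ℂ := star v ⬝ᵥ (A.map ((↑) : ℝ → ℂ)) *ᵥ v with ha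
  set b : ℂ := star v ⬝ᵥ (B.map ((↑) : ℝ → ℂ)) *ᵥ v with hb
  have key : z * a - b = 0 := by
    have : star v ⬝ᵥ M *ᵥ v = 0 := by rw [hvm, dotProduct_zero]
    rw [hMdef, sub_mulVec, smul_mulVec, dotProduct_sub, dotProduct_smul,
      smul_eq_mul] at this
    exact this
  have hBsym : (B.map ((↑) : ℝ → ℂ)).IsHermitian := by
    have hBh : B.IsHermitian := by
      rwa [Matrix.IsHermitian, Matrix.conjTranspose_eq_transpose_of_trivial]
    exact hBh.map _ (fun x => (Complex.conj_ofReal x).symm)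
  have hAsym : (A.map ((↑) : ℝ → ℂ)).IsHermitian := by
    have hAh : A.IsHermitian := by
      rw [Matrix.IsHermitian, Matrix.conjTranspose_eq_transpose_of_trivial]
      exact hA.isHermitian.eq  -- fix
    exact hAh.map _ (fun x => (Complex.conj_ofReal x).symm)
  have haim : a.im = 0 := herm_dot_real _ hAsym v
  have hbim : b.im = 0 := herm_dot_real _ hBsym v
  have hare : 0 < a.re := by
    rw [ha, real_dot_re]
    set x : n → ℝ := fun i => (v i).re
    set y : n → ℝ := fun i => (v i).im
    by_cases hx : x = 0
    · have hy : y ≠ 0 := by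
        intro hy
        apply hv0
        funext i
        have h1 : (v i).re = 0 := congrFun hx i
        have h2 : (v i).im = 0 := congrFun hy i
        exact Complex.ext h1 h2
      have := hA.dotProduct_mulVec_pos hy
      simp only [star_trivial] at this
      have h0 : x ⬝ᵥ A *ᵥ x = 0 := by rw [hx]; simp
      rw [h0, zero_add]
      exact this
    · have := hA.dotProduct_mulVec_pos hx
      simp only [star_trivial] at this
      have h0 : 0 ≤ y ⬝ᵥ A *ᵥ y := hA.posSemidef.dotProduct_mulVec_nonneg y
      linarith
  have him : (z * a).im = 0 := by rw [sub_eq_zero] at key; rw [key]; exact hbim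
  rw [Complex.mul_im, haim, mul_zero, zero_add] at him
  exact (mul_eq_zero.mp him).resolve_right (ne_of_gt hare)
end

section
/- Let n be a finite type with decidable equality, A, B : Matrix n n ℝ with A positive definite and B symmetric. Set M := X • A.map C − B.map C : Matrix n n ℝ[X], let s₀ : ℝ, and let μ := (M.det).rootMultiplicity s₀. Then for all indices i j, the polynomial (X − C s₀)^(μ − 1) divides (Matrix.adjugate M) i j. (Weierstrass's 'remarkable circumstance' of 1858: for a definite pencil, a root of multiplicity μ of the determinant is a root of multiplicity at least μ − 1 of every first minor; in particular the classical eigenvector formulas never take the form 0/0.) -/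
open Polynomial Matrix

private lemma adj_diag_dvd {n : Type*} [Fintype n] [DecidableEq n] (e : n → ℝ) (s₀ : ℝ)
    (i j : n) :
    (X - C s₀) ^ ((Finset.univ.filter (fun k => e k = s₀)).card - 1) ∣
      (Matrix.adjugate (Matrix.diagonal (fun k => (X : ℝ[X]) - C (e k)))) i j := by
  rw [Matrix.adjugate_diagonal]
  rcases eq_or_ne i j with rfl | hij
  · rw [Matrix.diagonal_apply_eq]
    set F := (Finset.univ.erase i).filter (fun k => e k = s₀) with hF
    have h1 : (X - C s₀) ^ F.card ∣ ∏ k ∈ Finset.univ.erase i, (X - C (e k)) := by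
      have : (X - C s₀) ^ F.card = ∏ k ∈ F, ((X : ℝ[X]) - C (e k)) := by
        rw [Finset.prod_congr rfl (fun k hk => by
          rw [(Finset.mem_filter.mp hk).2]), Finset.prod_const]
      rw [this]
      exact Finset.prod_dvd_prod_of_subset _ _ _ (Finset.filter_subset _ _)
    refine dvd_trans (pow_dvd_pow _ ?_) h1
    have hFe : F = (Finset.univ.filter (fun k => e k = s₀)).erase i := by
      ext k
      simp only [hF, Finset.mem_filter, Finset.mem_erase, Finset.mem_univ, true_and, and_true]
    rw [hFe]
    exact Finset.pred_card_le_card_erase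
  · rw [Matrix.diagonal_apply_ne _ hij]
    exact dvd_zero _

private lemma rootMult_prod {n : Type*} [Fintype n] [DecidableEq n] (e : n → ℝ) (s₀ : ℝ) :
    (∏ k, ((X : ℝ[X]) - C (e k))).rootMultiplicity s₀
      = (Finset.univ.filter (fun k => e k = s₀)).card := by
  have h : (∏ k, ((X : ℝ[X]) - C (e k)))
      = ((Finset.univ.val.map e).map (fun a => X - C a)).prod := by
    rw [Multiset.map_map]; rfl
  rw [← Polynomial.count_roots, h, Polynomial.roots_multiset_prod_X_sub_C,
    Multiset.count_map, Finset.card_filter, ← Multiset.countP_eq_card_filter,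
    Finset.sum_boole]
  simp [Multiset.countP_eq_card_filter, eq_comm, Finset.card_filter, Finset.filter]

theorem weierstrass_remarkable_circumstance
    {n : Type*} [Fintype n] [DecidableEq n]
    (A B : Matrix n n ℝ) (hA : A.PosDef) (hB : B.IsSymm) (s₀ : ℝ) :
    ∀ i j : n,
      (X - C s₀) ^ ((Matrix.det ((X : ℝ[X]) • A.map C - B.map C)).rootMultiplicity s₀ - 1) ∣
        (Matrix.adjugate ((X : ℝ[X]) • A.map C - B.map C)) i j := by
  intro i j
  set P := (open scoped MatrixOrder in CFC.sqrt A) with hPdef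
  have hPP : P * P = A := by
    open scoped MatrixOrder in exact CFC.sqrt_mul_sqrt_self A hA.posSemidef.nonneg
  have hPherm : P.IsHermitian := by
    open scoped MatrixOrder in exact (CFC.sqrt_nonneg A).posSemidef.isHermitian
  have hPsymm : Pᵀ = P := by
    rw [← Matrix.conjTranspose_eq_transpose_of_trivial]; exact hPherm
  have hdetA : A.det ≠ 0 := ne_of_gt hA.det_pos
  have hPdet : IsUnit P.det := by
    rw [isUnit_iff_ne_zero]
    intro h; apply hdetA; rw [← hPP, Matrix.det_mul, h, mul_zero]
  have hPinv : P * P⁻¹ = 1 := Matrix.mul_nonsing_inv P hPdet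
  have hPinv' : P⁻¹ * P = 1 := Matrix.nonsing_inv_mul P hPdet
  set S := P⁻¹ * B * P⁻¹ with hSdef
  have hSherm : S.IsHermitian := by
    rw [Matrix.IsHermitian, Matrix.conjTranspose_eq_transpose_of_trivial, hSdef,
      Matrix.transpose_mul, Matrix.transpose_mul, Matrix.transpose_nonsing_inv, hPsymm, hB.eq,
      mul_assoc]
  set U : Matrix n n ℝ := (Matrix.IsHermitian.eigenvectorUnitary hSherm : Matrix n n ℝ) with hU
  set e : n → ℝ := hSherm.eigenvalues with he
  have hUU : U * star U = 1 :=
    Matrix.mem_unitaryGroup_iff.mp (Matrix.IsHermitian.eigenvectorUnitary hSherm).2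
  have hSpec : S = U * Matrix.diagonal e * star U := by
    have := hSherm.spectral_theorem
    rwa [RCLike.ofReal_real_eq_id, Function.id_comp] at this
  set V := P * U with hV
  have hstarU : star U = Uᵀ := Matrix.conjTranspose_eq_transpose_of_trivial U
  have hAV : V * Vᵀ = A := by
    rw [hV, Matrix.transpose_mul, hPsymm, ← hstarU,
      show P * U * (star U * P) = P * (U * star U) * P by simp only [mul_assoc],
      hUU, mul_one, hPP]
  have hBV : V * Matrix.diagonal e * Vᵀ = B := by
    rw [hV, Matrix.transpose_mul, hPsymm, ← hstarU,
      show P * U * Matrix.diagonal e * (star U * P)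
        = P * (U * Matrix.diagonal e * star U) * P by simp only [mul_assoc],
      ← hSpec, hSdef,
      show P * (P⁻¹ * B * P⁻¹) * P = P * P⁻¹ * B * (P⁻¹ * P) by simp only [mul_assoc],
      hPinv, hPinv', one_mul, mul_one]
  set D : Matrix n n ℝ[X] := Matrix.diagonal (fun k => (X : ℝ[X]) - C (e k)) with hD
  have hDsplit : D = (X : ℝ[X]) • (1 : Matrix n n ℝ[X]) - (Matrix.diagonal e).map C := by
    rw [Matrix.smul_one_eq_diagonal, Matrix.diagonal_map (map_zero C), hD, Matrix.diagonal_sub]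
  have h1 : V.map C * ((X : ℝ[X]) • (1 : Matrix n n ℝ[X])) * (Vᵀ).map C
      = (X : ℝ[X]) • A.map C := by
    rw [mul_smul_comm, mul_one, smul_mul_assoc, ← Matrix.map_mul, hAV]
  have h2 : V.map C * (Matrix.diagonal e).map C * (Vᵀ).map C = B.map C := by
    rw [← Matrix.map_mul, ← Matrix.map_mul, hBV]
  have hfact : (X : ℝ[X]) • A.map C - B.map C = V.map C * D * (Vᵀ).map C := by
    rw [hDsplit, Matrix.mul_sub, Matrix.sub_mul, h1, h2]
  have hdetV : V.det ≠ 0 := by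
    intro h
    apply hdetA
    rw [← hAV, Matrix.det_mul, h, zero_mul]
  have hprodne : (∏ k, ((X : ℝ[X]) - C (e k))) ≠ 0 :=
    Finset.prod_ne_zero_iff.mpr fun k _ => X_sub_C_ne_zero (e k)
  have hdetfact : ((X : ℝ[X]) • A.map C - B.map C).det
      = C (V.det * V.det) * ∏ k, ((X : ℝ[X]) - C (e k)) := by
    rw [hfact, Matrix.det_mul, Matrix.det_mul, ← RingHom.mapMatrix_apply,
      ← RingHom.mapMatrix_apply (M := Vᵀ), ← RingHom.map_det, ← RingHom.map_det,
      Matrix.det_transpose, hD, Matrix.det_diagonal, C_mul]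
    ring
  have hμ : ((X : ℝ[X]) • A.map C - B.map C).det.rootMultiplicity s₀
      = (Finset.univ.filter (fun k => e k = s₀)).card := by
    rw [hdetfact, Polynomial.rootMultiplicity_mul
        (mul_ne_zero (Polynomial.C_ne_zero.mpr (mul_ne_zero hdetV hdetV)) hprodne),
      Polynomial.rootMultiplicity_C, zero_add, rootMult_prod]
  rw [hμ, hfact, Matrix.adjugate_mul_distrib, Matrix.adjugate_mul_distrib, Matrix.mul_apply]
  refine Finset.dvd_sum fun k _ => ?_
  rw [Matrix.mul_apply, Finset.mul_sum]
  refine Finset.dvd_sum fun l _ => ?_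
  exact ((adj_diag_dvd e s₀ k l).mul_right _).mul_left _
end

section
/- Let n be a finite type with decidable equality and let A : Matrix n n ℝ be symmetric. Then for every μ : ℝ, the algebraic multiplicity equals the geometric multiplicity: (Matrix.charpoly A).rootMultiplicity μ = finrank ℝ (Module.End.eigenspace A.mulVecLin μ). (The property underlying Jordan's 1872 answer to Yvon-Villarceau: the quadratic character of the mechanical systems guarantees that they reduce to distinct independent equations even when characteristic roots coincide.) -/
open Polynomial Matrix

private lemma charpoly_diagonal_real {n : Type*} [Fintype n] [DecidableEq n] (d : n → ℝ) :
    (Matrix.diagonal d).charpoly = ∏ i, (X - C (d i)) := by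
  have h : charmatrix (diagonal d) = diagonal fun i => (X : ℝ[X]) - C (d i) := by
    ext i j
    by_cases h : i = j
    · subst h; simp [charmatrix_apply_eq]
    · simp [charmatrix_apply_ne _ _ _ h, diagonal_apply_ne _ h]
  rw [Matrix.charpoly, h, det_diagonal]

private lemma charpoly_conj_units {n : Type*} [Fintype n] [DecidableEq n]
    (U : (Matrix n n ℝ)ˣ) (B : Matrix n n ℝ) :
    ((U : Matrix n n ℝ) * B * (↑U⁻¹ : Matrix n n ℝ)).charpoly = B.charpoly := by
  have hUU : ((U : Matrix n n ℝ).map C) * ((↑U⁻¹ : Matrix n n ℝ).map C) = 1 := by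
    rw [← Matrix.map_mul, Units.mul_inv, Matrix.map_one C (map_zero C) (map_one C)]
  have hcm : charmatrix ((U : Matrix n n ℝ) * B * (↑U⁻¹ : Matrix n n ℝ)) =
      ((U : Matrix n n ℝ).map C) * charmatrix B * ((↑U⁻¹ : Matrix n n ℝ).map C) := by
    have hcomm : ((U : Matrix n n ℝ).map C) * Matrix.scalar n (X : ℝ[X]) =
        Matrix.scalar n (X : ℝ[X]) * ((U : Matrix n n ℝ).map C) :=
      (Matrix.scalar_commute (X : ℝ[X]) (fun r' => Commute.all _ _) _).symm
    simp only [charmatrix, RingHom.mapMatrix_apply, mul_sub, sub_mul]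
    rw [← Matrix.map_mul, ← Matrix.map_mul]
    congr 1
    rw [hcomm, mul_assoc, hUU, mul_one]
  rw [Matrix.charpoly, Matrix.charpoly, hcm, det_mul, det_mul]
  rw [mul_comm (det _ * det _) _, ← mul_assoc]
  nth_rewrite 2 [mul_comm]
  rw [← det_mul, hUU, det_one, one_mul]

private lemma rootMultiplicity_prod_X_sub_C {n : Type*} [DecidableEq n] (d : n → ℝ) (μ : ℝ)
    (s : Finset n) :
    (∏ i ∈ s, (X - C (d i))).rootMultiplicity μ = (s.filter fun i => d i = μ).card := by
  classical
  induction s using Finset.induction_on with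
  | empty => simp [rootMultiplicity_eq_zero (by simp : ¬IsRoot (1 : ℝ[X]) μ)]
  | insert a s hx ih =>
    have hm : (∏ i ∈ s, ((X : ℝ[X]) - C (d i))).Monic :=
      monic_prod_of_monic _ _ (fun i _ => monic_X_sub_C (d i))
    rw [Finset.prod_insert hx, rootMultiplicity_mul
      (mul_ne_zero (monic_X_sub_C (d a)).ne_zero hm.ne_zero), ih,
      Finset.filter_insert, rootMultiplicity_X_sub_C]
    by_cases h : d a = μ
    · rw [if_pos h.symm, if_pos h, Finset.card_insert_of_notMem (by simp [hx])]
      omega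
    · rw [if_neg (fun hh => h hh.symm), if_neg h, zero_add]

theorem symm_algebraic_eq_geometric_multiplicity
    {n : Type*} [Fintype n] [DecidableEq n]
    (A : Matrix n n ℝ) (hA : A.IsSymm) (μ : ℝ) :
    (Matrix.charpoly A).rootMultiplicity μ =
      Module.finrank ℝ (Module.End.eigenspace A.mulVecLin μ) := by
  classical
  have hH : A.IsHermitian := by
    rwa [Matrix.IsHermitian, conjTranspose_eq_transpose_of_trivial]
  set d : n → ℝ := hH.eigenvalues with hd
  set U : Matrix n n ℝ := (hH.eigenvectorUnitary : Matrix n n ℝ) with hU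
  have hUstar : U * star U = 1 := (Matrix.mem_unitaryGroup_iff).mp (hH.eigenvectorUnitary).2
  have hstarU : star U * U = 1 := (Matrix.mem_unitaryGroup_iff').mp (hH.eigenvectorUnitary).2
  have hspec : A = U * diagonal d * star U := by
    simpa using hH.spectral_theorem
  -- algebraic multiplicity
  set Uu : (Matrix n n ℝ)ˣ := ⟨U, star U, hUstar, hstarU⟩ with hUu
  have halg : (Matrix.charpoly A).rootMultiplicity μ =
      (Finset.univ.filter fun i => d i = μ).card := by
    have : A = (Uu : Matrix n n ℝ) * diagonal d * (↑Uu⁻¹ : Matrix n n ℝ) := hspec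
    rw [this, charpoly_conj_units, charpoly_diagonal_real,
      rootMultiplicity_prod_X_sub_C]
  -- the shifted matrix
  have key : A - μ • 1 = U * diagonal (fun i => d i - μ) * star U := by
    have h1 : diagonal (fun i => d i - μ) = diagonal d - μ • (1 : Matrix n n ℝ) := by
      rw [smul_one_eq_diagonal, ← diagonal_sub]
    rw [h1, mul_sub, sub_mul, ← hspec]
    congr 1
    rw [mul_smul_comm, smul_mul_assoc, mul_one, hUstar]
  -- geometric multiplicity
  have hends : A.mulVecLin - μ • 1 = (A - μ • (1 : Matrix n n ℝ)).mulVecLin := by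
    refine LinearMap.ext fun x => ?_
    simp only [LinearMap.sub_apply, LinearMap.smul_apply, Module.End.one_apply,
      Matrix.mulVecLin_apply, Matrix.sub_mulVec, Matrix.smul_mulVec,
      Matrix.one_mulVec]
  have hrank : (A - μ • (1 : Matrix n n ℝ)).rank =
      Fintype.card {i // d i - μ ≠ 0} := by
    rw [key, rank_mul_eq_left_of_isUnit_det _ _ ?hdet1,
      rank_mul_eq_right_of_isUnit_det _ _ ?hdet2, Matrix.rank_diagonal]
    case hdet1 =>
      exact IsUnit.of_mul_eq_one U.det (by rw [← det_mul, hstarU, det_one])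
    case hdet2 =>
      exact IsUnit.of_mul_eq_one (star U).det (by rw [← det_mul, hUstar, det_one])
  have hgeo : Module.finrank ℝ (Module.End.eigenspace A.mulVecLin μ) =
      Fintype.card n - (A - μ • (1 : Matrix n n ℝ)).rank := by
    rw [Module.End.eigenspace_def, hends]
    have := LinearMap.finrank_range_add_finrank_ker
      (A - μ • (1 : Matrix n n ℝ)).mulVecLin
    rw [Module.finrank_fintype_fun_eq_card] at this
    have hr : (A - μ • (1 : Matrix n n ℝ)).rank =
        Module.finrank ℝ (LinearMap.range (A - μ • (1 : Matrix n n ℝ)).mulVecLin) := rfl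
    omega
  rw [halg, hgeo, hrank]
  have hcard : Fintype.card {i // d i - μ ≠ 0} =
      (Finset.univ.filter fun i => ¬ (d i = μ)).card := by
    rw [Fintype.card_subtype]
    congr 1
    ext i
    simp [sub_eq_zero]
  rw [hcard]
  have := Finset.card_filter_add_card_filter_not
    (s := (Finset.univ : Finset n)) (p := fun i => d i = μ)
  rw [Finset.card_univ] at this
  omega
end

section
/- Let n be a finite type with decidable equality, let A, A' : Matrix n n ℝ be positive definite and B, B' : Matrix n n ℝ be symmetric. Then the pairs are simultaneously congruent — i.e., there exists an invertible P : Matrix n n ℝ with Pᵀ * A * P = A' and Pᵀ * B * P = B' — if and only if there exists a real constant c > 0 such that det(X • A'.map C − B'.map C) = C c * det(X • A.map C − B.map C) in ℝ[X]. (Weierstrass–Kronecker: for definite pencils, the roots of the pencil determinant, with multiplicities, form a complete system of invariants for simultaneous congruence.) -/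
open Polynomial Matrix

section Aux

variable {n : Type*} [Fintype n] [DecidableEq n]

private lemma pencil_congr' (P A B : Matrix n n ℝ) :
    Matrix.det ((X : ℝ[X]) • (Pᵀ*A*P).map C - (Pᵀ*B*P).map C) =
      C (P.det ^ 2) * Matrix.det ((X : ℝ[X]) • A.map C - B.map C) := by
  have key : (X : ℝ[X]) • (Pᵀ*A*P).map C - (Pᵀ*B*P).map C
      = (P.map C)ᵀ * ((X : ℝ[X]) • A.map C - B.map C) * (P.map C) := by
    rw [Matrix.map_mul, Matrix.map_mul, Matrix.map_mul, Matrix.map_mul, Matrix.transpose_map]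
    rw [Matrix.mul_sub, Matrix.sub_mul, Matrix.mul_smul, Matrix.smul_mul]
  have hd : (P.map C).det = C P.det := ((Polynomial.C : ℝ →+* ℝ[X]).map_det P).symm
  rw [key, Matrix.det_mul, Matrix.det_mul, Matrix.det_transpose, hd, map_pow]
  ring

private def PCongruent (A B A' B' : Matrix n n ℝ) : Prop :=
  ∃ P : Matrix n n ℝ, IsUnit P.det ∧ Pᵀ * A * P = A' ∧ Pᵀ * B * P = B'

private lemma congruent_trans {A B A₂ B₂ A₃ B₃ : Matrix n n ℝ}
    (h1 : PCongruent A B A₂ B₂) (h2 : PCongruent A₂ B₂ A₃ B₃) : PCongruent A B A₃ B₃ := by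
  obtain ⟨P, hP, hPA, hPB⟩ := h1
  obtain ⟨Q, hQ, hQA, hQB⟩ := h2
  have key : ∀ M : Matrix n n ℝ, (P * Q)ᵀ * M * (P * Q) = Qᵀ * (Pᵀ * M * P) * Q := by
    intro M; simp only [Matrix.transpose_mul, Matrix.mul_assoc]
  exact ⟨P * Q, by rw [Matrix.det_mul]; exact hP.mul hQ,
    by rw [key, hPA, hQA], by rw [key, hPB, hQB]⟩

private lemma congruent_symm {A B A' B' : Matrix n n ℝ}
    (h : PCongruent A B A' B') : PCongruent A' B' A B := by
  obtain ⟨P, hP, hPA, hPB⟩ := h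
  have hk : (P⁻¹)ᵀ * Pᵀ = 1 := by
    rw [← Matrix.transpose_mul, Matrix.mul_nonsing_inv _ hP, Matrix.transpose_one]
  have key : ∀ M : Matrix n n ℝ, (P⁻¹)ᵀ * (Pᵀ * M * P) * P⁻¹ = M := by
    intro M
    simp only [← Matrix.mul_assoc]
    rw [hk, Matrix.one_mul, Matrix.mul_assoc, Matrix.mul_nonsing_inv _ hP, Matrix.mul_one]
  refine ⟨P⁻¹, ?_, by rw [← hPA, key], by rw [← hPB, key]⟩
  · exact Matrix.isUnit_nonsing_inv_det P hP
    
private lemma pencil_one_diag (f : n → ℝ) :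
    Matrix.det ((X : ℝ[X]) • (1 : Matrix n n ℝ).map C - (diagonal f).map C) =
      ∏ i, ((X : ℝ[X]) - C (f i)) := by
  have : (X : ℝ[X]) • (1 : Matrix n n ℝ).map C - (diagonal f).map C
      = diagonal fun i => (X : ℝ[X]) - C (f i) := by
    rw [Matrix.map_one _ (map_zero C) (map_one C), Matrix.diagonal_map (map_zero C),
      smul_eq_diagonal_mul, mul_one, Matrix.diagonal_sub]
  rw [this, Matrix.det_diagonal]

private lemma spectral_real {S : Matrix n n ℝ} (hS : S.IsSymm) :
    ∃ (U : Matrix n n ℝ) (f : n → ℝ), Uᵀ * U = 1 ∧ U * Uᵀ = 1 ∧ Uᵀ * S * U = diagonal f := by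
  have hH : S.IsHermitian := by
    rw [Matrix.IsHermitian, Matrix.conjTranspose_eq_transpose_of_trivial]; exact hS
  refine ⟨(hH.eigenvectorUnitary : Matrix n n ℝ), RCLike.ofReal ∘ hH.eigenvalues, ?_, ?_, ?_⟩
  · have := (Matrix.mem_unitaryGroup_iff'.mp (hH.eigenvectorUnitary).2)
    rwa [Matrix.star_eq_conjTranspose, Matrix.conjTranspose_eq_transpose_of_trivial] at this
  · have := (Matrix.mem_unitaryGroup_iff.mp (hH.eigenvectorUnitary).2)
    rwa [Matrix.star_eq_conjTranspose, Matrix.conjTranspose_eq_transpose_of_trivial] at this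
  · have := hH.conjStarAlgAut_star_eigenvectorUnitary
    rwa [Unitary.conjStarAlgAut_star_apply, Matrix.star_eq_conjTranspose, Matrix.conjTranspose_eq_transpose_of_trivial] at this

private lemma perm_diag (σ : Equiv.Perm n) (f : n → ℝ) :
    ∃ W : Matrix n n ℝ, Wᵀ * W = 1 ∧ W * Wᵀ = 1 ∧ Wᵀ * diagonal f * W = diagonal (f ∘ σ) := by
  have htr : (σ.symm.toPEquiv.toMatrix : Matrix n n ℝ)ᵀ = σ.toPEquiv.toMatrix := by
    rw [← PEquiv.toMatrix_symm, ← Equiv.toPEquiv_symm, Equiv.symm_symm]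
  have h1 : (σ.symm.toPEquiv.toMatrix : Matrix n n ℝ)ᵀ * σ.symm.toPEquiv.toMatrix = 1 := by
    rw [htr, PEquiv.toMatrix_toPEquiv_mul]
    ext i j
    simp [PEquiv.toMatrix, Equiv.toPEquiv_apply, Matrix.one_apply, Equiv.symm_apply_eq, eq_comm]
  have h2 : (σ.symm.toPEquiv.toMatrix : Matrix n n ℝ) * σ.symm.toPEquiv.toMatrixᵀ = 1 :=
    mul_eq_one_comm.mp h1
  refine ⟨σ.symm.toPEquiv.toMatrix, h1, h2, ?_⟩
  rw [htr, PEquiv.toMatrix_toPEquiv_mul, PEquiv.mul_toMatrix_toPEquiv, Equiv.symm_symm,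
    Matrix.submatrix_submatrix, Function.comp_id, Function.id_comp,
    Matrix.submatrix_diagonal_equiv]

private lemma exists_perm_of_map_univ_eq {α : Type*} (f g : n → α) [DecidableEq α]
    (h : Finset.univ.val.map f = Finset.univ.val.map g) :
    ∃ σ : Equiv.Perm n, f = g ∘ σ := by
  have hcard : ∀ c, Fintype.card {a // f a = c} = Fintype.card {b // g b = c} := by
    intro c
    have h1 : ∀ (q : n → α),
        Fintype.card {a // q a = c} = Multiset.count c (Finset.univ.val.map q) := by
      intro q
      rw [Multiset.count_map, Fintype.card_subtype, Finset.card]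
      congr 1
      exact Multiset.filter_congr (by intro x _; exact eq_comm)
    rw [h1, h1, h]
  have e : ∀ c, {a // f a = c} ≃ {b // g b = c} := fun c => Fintype.equivOfCardEq (hcard c)
  refine ⟨Equiv.ofFiberEquiv e, ?_⟩
  funext a
  exact (Equiv.ofFiberEquiv_map e a).symm

private lemma pencil_one_eq_prod {S : Matrix n n ℝ} (hS : S.IsSymm) :
    ∃ f : n → ℝ, PCongruent (1 : Matrix n n ℝ) S 1 (diagonal f) ∧
      Matrix.det ((X : ℝ[X]) • (1 : Matrix n n ℝ).map C - S.map C) =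
        ∏ i, ((X : ℝ[X]) - C (f i)) := by
  obtain ⟨U, f, hU1, hU2, hUS⟩ := spectral_real hS
  have hdU : IsUnit U.det := by
    refine IsUnit.of_mul_eq_one Uᵀ.det ?_
    rw [← Matrix.det_mul, hU2, Matrix.det_one]
  have hU1' : Uᵀ * 1 * U = 1 := by rw [Matrix.mul_one]; exact hU1
  have hpc := pencil_congr' U 1 S
  rw [hU1', hUS] at hpc
  have hdU2 : U.det ^ 2 = 1 := by
    have : Uᵀ.det * U.det = 1 := by rw [← Matrix.det_mul, hU1, Matrix.det_one]
    rw [Matrix.det_transpose] at this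
    rw [sq]; exact this
  rw [hdU2, _root_.map_one, one_mul] at hpc
  exact ⟨f, ⟨U, hdU, hU1', hUS⟩, by rw [← hpc, pencil_one_diag]⟩

private lemma orth_congr_of_pencil {S S' : Matrix n n ℝ} (hS : S.IsSymm) (hS' : S'.IsSymm)
    {c : ℝ} (hc : c ≠ 0)
    (h : Matrix.det ((X : ℝ[X]) • (1 : Matrix n n ℝ).map C - S'.map C) =
         C c * Matrix.det ((X : ℝ[X]) • (1 : Matrix n n ℝ).map C - S.map C)) :
    PCongruent (1 : Matrix n n ℝ) S 1 S' := by
  obtain ⟨f, hcongf, hf⟩ := pencil_one_eq_prod hS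
  obtain ⟨g, hcongg, hg⟩ := pencil_one_eq_prod hS'
  rw [hf, hg] at h
  -- extract root multisets
  have hprod : ∀ q : n → ℝ, (∏ i, ((X : ℝ[X]) - C (q i)))
      = ((Finset.univ.val.map q).map fun a => (X : ℝ[X]) - C a).prod := by
    intro q
    rw [Multiset.map_map]
    rfl
  have hroots : Finset.univ.val.map g = Finset.univ.val.map f := by
    have h1 : (∏ i, ((X : ℝ[X]) - C (g i))).roots = Finset.univ.val.map g := by
      rw [hprod, Polynomial.roots_multiset_prod_X_sub_C]
    have h2 : (C c * ∏ i, ((X : ℝ[X]) - C (f i))).roots = Finset.univ.val.map f := by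
      rw [Polynomial.roots_C_mul _ hc, hprod, Polynomial.roots_multiset_prod_X_sub_C]
    rw [← h1, ← h2, h]
  obtain ⟨σ, hσ⟩ := exists_perm_of_map_univ_eq g f hroots
  obtain ⟨W, hW1, hW2, hWd⟩ := perm_diag σ f
  have hdW : IsUnit W.det := by
    refine IsUnit.of_mul_eq_one Wᵀ.det ?_
    rw [← Matrix.det_mul, hW2, Matrix.det_one]
  have hWone : Wᵀ * 1 * W = 1 := by rw [Matrix.mul_one]; exact hW1
  have hcongW : PCongruent (1 : Matrix n n ℝ) (diagonal f) 1 (diagonal g) := by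
    refine ⟨W, hdW, hWone, ?_⟩
    rw [hWd, hσ]
  exact congruent_trans (congruent_trans hcongf hcongW) (congruent_symm hcongg)

open scoped MatrixOrder in
private lemma posdef_reduction {A B : Matrix n n ℝ} (hA : A.PosDef) (hB : B.IsSymm) :
    ∃ S : Matrix n n ℝ, S.IsSymm ∧ PCongruent A B 1 S := by
  have hAps := hA.posSemidef
  set R := CFC.sqrt A with hRdef
  have hRR : R * R = A := CFC.sqrt_mul_sqrt_self A hAps.nonneg
  have hRsymm : Rᵀ = R := by
    have := (CFC.sqrt_nonneg A).posSemidef.1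
    rwa [Matrix.IsHermitian, Matrix.conjTranspose_eq_transpose_of_trivial] at this
  have hdetA : A.det ≠ 0 := ne_of_gt hA.det_pos
  have hdR : IsUnit R.det := by
    have : R.det * R.det = A.det := by rw [← Matrix.det_mul, hRR]
    have hne : R.det ≠ 0 := by
      intro h0
      rw [h0, mul_zero] at this
      exact hdetA this.symm
    exact hne.isUnit
  have hRinv : R * R⁻¹ = 1 := Matrix.mul_nonsing_inv _ hdR
  have hinvR : R⁻¹ * R = 1 := Matrix.nonsing_inv_mul _ hdR
  have hRinvT : (R⁻¹)ᵀ = R⁻¹ := by rw [Matrix.transpose_nonsing_inv, hRsymm]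
  have hdRinv : IsUnit (R⁻¹).det := by
    refine IsUnit.of_mul_eq_one R.det ?_
    rw [← Matrix.det_mul, hinvR, Matrix.det_one]
  refine ⟨R⁻¹ * B * R⁻¹, ?_, ⟨R⁻¹, hdRinv, ?_, ?_⟩⟩
  · rw [Matrix.IsSymm, Matrix.transpose_mul, Matrix.transpose_mul, hRinvT, hB.eq,
      Matrix.mul_assoc]
  · rw [hRinvT, ← hRR]
    calc R⁻¹ * (R * R) * R⁻¹ = (R⁻¹ * R) * (R * R⁻¹) := by
          simp only [Matrix.mul_assoc]
      _ = 1 := by rw [hinvR, hRinv, Matrix.one_mul]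
  · rw [hRinvT]

end Aux

theorem definite_pencil_congruence_iff_pencil_polynomial
    {n : Type*} [Fintype n] [DecidableEq n]
    (A A' B B' : Matrix n n ℝ)
    (hA : A.PosDef) (hA' : A'.PosDef) (hB : B.IsSymm) (hB' : B'.IsSymm) :
    (∃ P : Matrix n n ℝ, IsUnit P.det ∧ Pᵀ * A * P = A' ∧ Pᵀ * B * P = B') ↔
    (∃ c : ℝ, 0 < c ∧
      Matrix.det ((X : ℝ[X]) • A'.map C - B'.map C) =
        C c * Matrix.det ((X : ℝ[X]) • A.map C - B.map C)) := by
  constructor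
  · rintro ⟨P, hP, hPA, hPB⟩
    refine ⟨P.det ^ 2, pow_two_pos_of_ne_zero hP.ne_zero, ?_⟩
    rw [← hPA, ← hPB]
    exact pencil_congr' P A B
  · rintro ⟨c, hc, hpencil⟩
    obtain ⟨S, hSsymm, hScong⟩ := posdef_reduction hA hB
    obtain ⟨S', hS'symm, hS'cong⟩ := posdef_reduction hA' hB'
    -- pencil relations from the congruences
    obtain ⟨P₁, hP₁, hP₁A, hP₁B⟩ := hScong
    obtain ⟨P₂, hP₂, hP₂A, hP₂B⟩ := hS'cong
    have hpc₁ := pencil_congr' P₁ A B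
    rw [hP₁A, hP₁B] at hpc₁
    have hpc₂ := pencil_congr' P₂ A' B'
    rw [hP₂A, hP₂B] at hpc₂
    -- pencil(1,S') = C c'' * pencil(1,S)
    have hd₁ : P₁.det ^ 2 ≠ 0 := pow_ne_zero _ hP₁.ne_zero
    have hd₂ : P₂.det ^ 2 ≠ 0 := pow_ne_zero _ hP₂.ne_zero
    have key : Matrix.det ((X : ℝ[X]) • (1 : Matrix n n ℝ).map C - S'.map C) =
        C (P₂.det ^ 2 * c / P₁.det ^ 2) *
          Matrix.det ((X : ℝ[X]) • (1 : Matrix n n ℝ).map C - S.map C) := by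
      rw [hpc₂, hpencil, hpc₁]
      rw [← mul_assoc, ← mul_assoc, ← _root_.map_mul, ← _root_.map_mul]
      congr 2
      field_simp
      rw [mul_div_assoc, div_self hP₁.ne_zero, mul_one]
    have hcne : P₂.det ^ 2 * c / P₁.det ^ 2 ≠ 0 := by
      apply div_ne_zero (mul_ne_zero hd₂ (ne_of_gt hc)) hd₁
    have horth := orth_congr_of_pencil hSsymm hS'symm hcne key
    exact congruent_trans (congruent_trans ⟨P₁, hP₁, hP₁A, hP₁B⟩ horth)
      (congruent_symm ⟨P₂, hP₂, hP₂A, hP₂B⟩)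
end

section
/- Let n be a finite type with decidable equality, A : Matrix n n ℝ, and suppose P, Q : Matrix n n ℝ are invertible matrices and d, e : n → ℝ are such that Pᵀ * A * P = Matrix.diagonal d and Qᵀ * A * Q = Matrix.diagonal e. Then the number of positive coefficients is the same in both diagonalizations, and likewise for negative coefficients: (Finset.univ.filter fun i => 0 < d i).card = (Finset.univ.filter fun i => 0 < e i).card and (Finset.univ.filter fun i => d i < 0).card = (Finset.univ.filter fun i => e i < 0).card. (Hermite's 1857 law of inertia: whatever real substitution is used to reduce a quadratic form to a sum of squares, the number of coefficients of a given sign is always the same.) -/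
open Matrix

section Aux

variable {n : Type*} [Fintype n] [DecidableEq n]

/-- The subspace of vectors supported on `{i | p i}`. -/
noncomputable def coordSub (p : n → Prop) [DecidablePred p] : Submodule ℝ (n → ℝ) :=
  LinearMap.ker (LinearMap.funLeft ℝ ℝ (Subtype.val : {i // ¬ p i} → n))

omit [Fintype n] [DecidableEq n] in
lemma mem_coordSub {p : n → Prop} [DecidablePred p] {x : n → ℝ} :
    x ∈ coordSub p ↔ ∀ i, ¬ p i → x i = 0 := by
  simp only [coordSub, LinearMap.mem_ker, LinearMap.funLeft_apply, funext_iff]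
  constructor
  · intro h i hi
    exact h ⟨i, hi⟩
  · intro h i
    exact h i.1 i.2

set_option linter.unusedSectionVars false in
lemma finrank_coordSub (p : n → Prop) [DecidablePred p] :
    Module.finrank ℝ (coordSub p) = (Finset.univ.filter p).card := by
  have hsurj : Function.Surjective (LinearMap.funLeft ℝ ℝ (Subtype.val : {i // ¬ p i} → n)) :=
    LinearMap.funLeft_surjective_of_injective ℝ ℝ _ Subtype.val_injective
  have h1 := LinearMap.finrank_range_add_finrank_ker
    (LinearMap.funLeft ℝ ℝ (Subtype.val : {i // ¬ p i} → n))
  rw [LinearMap.range_eq_top.mpr hsurj, finrank_top] at h1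
  have h2 : Module.finrank ℝ ({i // ¬ p i} → ℝ) = (Finset.univ.filter fun i => ¬ p i).card := by
    rw [Module.finrank_fintype_fun_eq_card, Fintype.card_subtype]
  have h3 : Module.finrank ℝ ((i : n) → ℝ) = Fintype.card n :=
    Module.finrank_fintype_fun_eq_card ℝ
  have h4 : (Finset.univ.filter p).card + (Finset.univ.filter fun i => ¬ p i).card =
      (Finset.univ : Finset n).card :=
    Finset.card_filter_add_card_filter_not (s := Finset.univ) (p := p)
  have h5 : (Finset.univ : Finset n).card = Fintype.card n := Finset.card_univ
  simp only [coordSub] at *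
  rw [h2, h3, ← h5, ← h4] at h1; exact (Nat.add_left_cancel (h1.trans (Nat.add_comm _ _))).symm ▸ rfl

lemma diag_quad (f : n → ℝ) (x : n → ℝ) :
    x ⬝ᵥ (Matrix.diagonal f).mulVec x = ∑ i, f i * x i ^ 2 := by
  simp only [dotProduct, Matrix.mulVec_diagonal]
  exact Finset.sum_congr rfl fun i _ => by ring

lemma pos_card_le (d e : n → ℝ) (M : Matrix n n ℝ) (hM : IsUnit M.det)
    (h : Mᵀ * Matrix.diagonal d * M = Matrix.diagonal e) :
    (Finset.univ.filter fun i => 0 < e i).card ≤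
      (Finset.univ.filter fun i => 0 < d i).card := by
  classical
  have hq : ∀ x : n → ℝ,
      (M.mulVec x) ⬝ᵥ (Matrix.diagonal d).mulVec (M.mulVec x)
        = x ⬝ᵥ (Matrix.diagonal e).mulVec x := by
    intro x
    rw [← h, ← Matrix.mulVec_mulVec, ← Matrix.mulVec_mulVec,
      Matrix.dotProduct_mulVec x, Matrix.vecMul_transpose]
  haveI := M.invertibleOfIsUnitDet hM
  set eM : (n → ℝ) ≃ₗ[ℝ] (n → ℝ) := M.toLinearEquiv' ‹_› with heM
  have heMapp : ∀ x, eM x = M.mulVec x := fun x => rfl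
  set V := (coordSub (fun i => 0 < e i)).map (eM : (n → ℝ) →ₗ[ℝ] (n → ℝ)) with hV
  set W := coordSub (fun i => ¬ 0 < d i) with hW
  have hdisj : Disjoint V W := by
    rw [Submodule.disjoint_def]
    intro y hyV hyW
    obtain ⟨x, hx, rfl⟩ := hyV
    by_contra hy0
    have hyM : (↑eM : (n → ℝ) →ₗ[ℝ] (n → ℝ)) x = M.mulVec x := rfl
    rw [hyM] at hyW hy0
    have hx0 : x ≠ 0 := by
      rintro rfl
      exact hy0 (Matrix.mulVec_zero M)
    rw [SetLike.mem_coe, mem_coordSub] at hx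
    rw [hW, mem_coordSub] at hyW
    have hpos : 0 < x ⬝ᵥ (Matrix.diagonal e).mulVec x := by
      rw [diag_quad]
      obtain ⟨j, hj⟩ := Function.ne_iff.mp hx0
      have hje : 0 < e j := by
        by_contra hje
        exact hj (hx j hje)
      refine Finset.sum_pos' (fun i _ => ?_) ⟨j, Finset.mem_univ j, ?_⟩
      · by_cases hi : 0 < e i
        · exact mul_nonneg hi.le (sq_nonneg _)
        · rw [hx i hi]; simp
      · exact mul_pos hje (pow_pos (abs_pos.mpr hj) 2 |>.trans_eq (by rw [sq_abs]) )
    have hnonpos : (M.mulVec x) ⬝ᵥ (Matrix.diagonal d).mulVec (M.mulVec x) ≤ 0 := by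
      rw [diag_quad]
      refine Finset.sum_nonpos fun i _ => ?_
      by_cases hi : 0 < d i
      · rw [hyW i (not_not_intro hi)]; simp
      · have h1 : d i ≤ 0 := le_of_not_gt hi
        exact mul_nonpos_of_nonpos_of_nonneg h1 (sq_nonneg _)
    rw [hq] at hnonpos
    exact absurd hpos (not_lt.mpr hnonpos)
  have h1 : Module.finrank ℝ V + Module.finrank ℝ W ≤
      Module.finrank ℝ (n → ℝ) :=
    Submodule.finrank_add_finrank_le_of_disjoint hdisj
  rw [hV, LinearEquiv.finrank_map_eq, finrank_coordSub, hW, finrank_coordSub,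
    Module.finrank_fintype_fun_eq_card] at h1
  have h2 := Finset.card_filter_add_card_filter_not
    (s := Finset.univ) (p := fun i => 0 < d i)
  have h3 : (Finset.univ : Finset n).card = Fintype.card n := Finset.card_univ
  omega

lemma pos_card_le_of_congr (A P Q : Matrix n n ℝ) (d e : n → ℝ)
    (hP : IsUnit P.det) (hQ : IsUnit Q.det)
    (hd : Pᵀ * A * P = Matrix.diagonal d)
    (he : Qᵀ * A * Q = Matrix.diagonal e) :
    (Finset.univ.filter fun i => 0 < e i).card ≤
      (Finset.univ.filter fun i => 0 < d i).card := by
  refine pos_card_le d e (P⁻¹ * Q) ?_ ?_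
  · rw [Matrix.det_mul]
    exact (Matrix.isUnit_nonsing_inv_det P hP).mul hQ
  · have hPt : IsUnit Pᵀ.det := by rwa [Matrix.det_transpose]
    calc (P⁻¹ * Q)ᵀ * Matrix.diagonal d * (P⁻¹ * Q)
        = Qᵀ * ((Pᵀ)⁻¹ * Pᵀ * A * (P * P⁻¹)) * Q := by
          rw [← hd, Matrix.transpose_mul, Matrix.transpose_nonsing_inv]; noncomm_ring
      _ = Qᵀ * A * Q := by
          rw [Matrix.nonsing_inv_mul _ hPt, Matrix.mul_nonsing_inv _ hP, one_mul, mul_one]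
      _ = Matrix.diagonal e := he

end Aux

theorem law_of_inertia
    {n : Type*} [Fintype n] [DecidableEq n]
    (A : Matrix n n ℝ) (P Q : Matrix n n ℝ) (d e : n → ℝ)
    (hP : IsUnit P.det) (hQ : IsUnit Q.det)
    (hd : Pᵀ * A * P = Matrix.diagonal d)
    (he : Qᵀ * A * Q = Matrix.diagonal e) :
    (Finset.univ.filter fun i => 0 < d i).card =
      (Finset.univ.filter fun i => 0 < e i).card ∧
    (Finset.univ.filter fun i => d i < 0).card =
      (Finset.univ.filter fun i => e i < 0).card := by
  have hd' : Pᵀ * (-A) * P = Matrix.diagonal (-d) := by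
    rw [show ((-d) : n → ℝ) = fun i => -d i from rfl, ← Matrix.diagonal_neg, ← hd]; noncomm_ring
  have he' : Qᵀ * (-A) * Q = Matrix.diagonal (-e) := by
    rw [show ((-e) : n → ℝ) = fun i => -e i from rfl, ← Matrix.diagonal_neg, ← he]; noncomm_ring
  have k1 := pos_card_le_of_congr A P Q d e hP hQ hd he
  have k2 := pos_card_le_of_congr A Q P e d hQ hP he hd
  have k3 := pos_card_le_of_congr (-A) P Q (-d) (-e) hP hQ hd' he'
  have k4 := pos_card_le_of_congr (-A) Q P (-e) (-d) hQ hP he' hd'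
  have hfd : (Finset.univ.filter fun i => 0 < (-d) i) =
      (Finset.univ.filter fun i => d i < 0) :=
    Finset.filter_congr fun i _ => by simp
  have hfe : (Finset.univ.filter fun i => 0 < (-e) i) =
      (Finset.univ.filter fun i => e i < 0) :=
    Finset.filter_congr fun i _ => by simp
  rw [hfd, hfe] at k3 k4
  exact ⟨le_antisymm k2 k1, le_antisymm k4 k3⟩
end

section
/- Let A : Matrix (Fin n) (Fin n) ℝ be symmetric, and for 0 ≤ k ≤ n let Δ k denote the k-th leading principal minor of A, with Δ 0 = 1. Assume Δ k ≠ 0 for all k with 1 ≤ k ≤ n. Then there exists a lower unitriangular matrix L : Matrix (Fin n) (Fin n) ℝ (i.e., L i i = 1 for all i and L i j = 0 whenever i < j) such that A = L * Matrix.diagonal (fun k => Δ (k+1) / Δ k) * Lᵀ. (The Hermite–Jacobi reduction used by Darboux in 1874: f = Δ_{n−1}X₁² + (Δ_{n−2}/Δ_{n−1})X₂² + ⋯ + (Δ/Δ₁)Xₙ², a sum of squares whose coefficients are ratios of successive leading principal minors.) -/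
open Matrix

private theorem hermite_jacobi_aux (n : ℕ) :
    ∀ (A : Matrix (Fin n) (Fin n) ℝ), A.IsSymm →
    ∀ (Δ : ℕ → ℝ),
      (∀ (k : ℕ) (h : k ≤ n),
        Δ k = (A.submatrix (Fin.castLE h) (Fin.castLE h)).det) →
      (∀ k : ℕ, 1 ≤ k → k ≤ n → Δ k ≠ 0) →
    ∃ L : Matrix (Fin n) (Fin n) ℝ,
      (∀ i, L i i = 1) ∧ (∀ i j : Fin n, i < j → L i j = 0) ∧
      A = L * Matrix.diagonal (fun k : Fin n => Δ ((k : ℕ) + 1) / Δ (k : ℕ)) * Lᵀ := by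
  induction n with
  | zero =>
    intro A _ Δ _ _
    refine ⟨1, fun i => i.elim0, fun i => i.elim0, ?_⟩
    ext i
    exact i.elim0
  | succ n ih =>
    intro A hA Δ hΔ hne
    have hΔ0 : Δ 0 = 1 := by
      rw [hΔ 0 (Nat.zero_le _)]
      exact Matrix.det_fin_zero
    have hΔk : ∀ k : ℕ, k ≤ n + 1 → Δ k ≠ 0 := by
      intro k hk
      rcases Nat.eq_zero_or_pos k with h0 | h0
      · rw [h0, hΔ0]; exact one_ne_zero
      · exact hne k h0 hk
    set A₁ : Matrix (Fin n) (Fin n) ℝ :=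
      A.submatrix (Fin.castLE n.le_succ) (Fin.castLE n.le_succ) with hA₁def
    have hA₁ : A₁.IsSymm := by
      apply Matrix.IsSymm.ext
      intro i j
      exact hA.apply (Fin.castLE n.le_succ i) (Fin.castLE n.le_succ j)
    have hΔ' : ∀ (k : ℕ) (h : k ≤ n),
        Δ k = (A₁.submatrix (Fin.castLE h) (Fin.castLE h)).det := by
      intro k h
      rw [hΔ k (h.trans n.le_succ)]
      rfl
    obtain ⟨L₁, hL₁diag, hL₁tri, hfact⟩ :=
      ih A₁ hA₁ Δ hΔ' (fun k h1 h2 => hne k h1 (h2.trans n.le_succ))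
    set d : Fin n → ℝ := fun k => Δ ((k : ℕ) + 1) / Δ (k : ℕ) with hd_def
    set D₁ : Matrix (Fin n) (Fin n) ℝ := Matrix.diagonal d with hD₁def
    have hd : ∀ k : Fin n, d k ≠ 0 := fun k =>
      div_ne_zero (hΔk _ (by omega)) (hΔk _ (by omega))
    have hD₁det : D₁.det ≠ 0 := by
      rw [hD₁def, Matrix.det_diagonal]
      exact Finset.prod_ne_zero_iff.mpr fun k _ => hd k
    have hL₁det : L₁.det = 1 := by
      rw [Matrix.det_of_lowerTriangular L₁ (fun i j hij => hL₁tri i j hij)]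
      simp [hL₁diag]
    have hL₁Tdet : (L₁ᵀ).det = 1 := by rw [Matrix.det_transpose]; exact hL₁det
    have hA₁det : A₁.det = Δ n := (hΔ' n le_rfl).symm.trans (by congr 1)
    have hD₁detval : D₁.det = Δ n := by
      have h1 : A₁.det = L₁.det * D₁.det * (L₁ᵀ).det := by
        rw [hfact, Matrix.det_mul, Matrix.det_mul]
      rw [hL₁det, hL₁Tdet, one_mul, mul_one] at h1
      rw [← h1, hA₁det]
    set b : Matrix (Fin n) (Fin 1) ℝ :=
      Matrix.of (fun i _ => A (Fin.castLE n.le_succ i) (Fin.last n)) with hbdef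
    set c : Matrix (Fin 1) (Fin 1) ℝ :=
      Matrix.of (fun _ _ => A (Fin.last n) (Fin.last n)) with hcdef
    have hLD : IsUnit (L₁ * D₁).det := by
      rw [Matrix.det_mul, hL₁det, one_mul]
      exact isUnit_iff_ne_zero.mpr hD₁det
    set W : Matrix (Fin n) (Fin 1) ℝ := (L₁ * D₁)⁻¹ * b with hWdef
    have hW : L₁ * D₁ * W = b := by
      rw [hWdef, ← Matrix.mul_assoc, Matrix.mul_nonsing_inv _ hLD, Matrix.one_mul]
    set s : ℝ := c 0 0 - (Wᵀ * D₁ * W) 0 0 with hsdef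
    set e : Fin n ⊕ Fin 1 ≃ Fin (n + 1) := finSumFinEquiv with hedef
    have helast : ∀ i : Fin 1, e (Sum.inr i) = Fin.last n := by
      intro i
      rw [hedef, finSumFinEquiv_apply_right]
      ext
      simp [Fin.natAdd]
    have hB : A.submatrix e e = Matrix.fromBlocks A₁ b bᵀ c := by
      ext i j
      rcases i with i | i <;> rcases j with j | j
      · rfl
      · simp only [Matrix.submatrix_apply, helast j]
        rfl
      · simp only [Matrix.submatrix_apply, helast i]
        show A (Fin.last n) (e (Sum.inl j)) = bᵀ i j
        exact hA.apply (e (Sum.inl j)) (Fin.last n)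
      · simp only [Matrix.submatrix_apply, helast i, helast j]
        rfl
    set Lb : Matrix (Fin n ⊕ Fin 1) (Fin n ⊕ Fin 1) ℝ :=
      Matrix.fromBlocks L₁ 0 Wᵀ 1 with hLbdef
    set Db : Matrix (Fin n ⊕ Fin 1) (Fin n ⊕ Fin 1) ℝ :=
      Matrix.diagonal (Sum.elim d (fun _ => s)) with hDbdef
    have hDb : Db = Matrix.fromBlocks D₁ 0 0 (Matrix.diagonal fun _ => s) := by
      rw [hDbdef, hD₁def, ← Matrix.fromBlocks_diagonal]
    have hprod : Lb * Db * Lbᵀ = Matrix.fromBlocks A₁ b bᵀ c := by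
      rw [hLbdef, hDb, Matrix.fromBlocks_transpose, Matrix.fromBlocks_multiply,
        Matrix.fromBlocks_multiply]
      have h1 : (Wᵀ * D₁ * W + Matrix.diagonal (fun _ : Fin 1 => s)
          : Matrix (Fin 1) (Fin 1) ℝ) = c := by
        ext i j
        have hi : i = 0 := Subsingleton.elim i 0
        have hj : j = 0 := Subsingleton.elim j 0
        subst hi; subst hj
        simp only [Matrix.add_apply, Matrix.diagonal_apply_eq]
        rw [hsdef]
        ring
      have h3 : Wᵀ * D₁ * L₁ᵀ = bᵀ := by
        have h4 : bᵀ = Wᵀ * D₁ * L₁ᵀ := by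
          rw [← hW]
          simp [Matrix.transpose_mul, Matrix.mul_assoc, hD₁def, Matrix.diagonal_transpose]
        exact h4.symm
      simp only [Matrix.mul_zero, Matrix.zero_mul, Matrix.mul_one, Matrix.one_mul,
        add_zero, zero_add, Matrix.transpose_zero, Matrix.transpose_one,
        Matrix.transpose_transpose]
      rw [h1, hW, h3, ← hfact]
    have hdetA : A.det = Δ (n + 1) := by
      rw [hΔ (n + 1) le_rfl]
      congr 1
    have hs : s = Δ (n + 1) / Δ n := by
      have hdet1 : (A.submatrix e e).det = A.det := Matrix.det_submatrix_equiv_self e A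
      have hLbdet : Lb.det = 1 := by
        rw [hLbdef, Matrix.det_fromBlocks_zero₁₂, hL₁det, Matrix.det_one, one_mul]
      have hdet2 : (Lb * Db * Lbᵀ).det = Db.det := by
        rw [Matrix.det_mul, Matrix.det_mul, Matrix.det_transpose, hLbdet, one_mul, mul_one]
      have hDbdet : Db.det = Δ n * s := by
        rw [hDb, Matrix.det_fromBlocks_zero₁₂, hD₁detval]
        congr 1
        rw [Matrix.det_fin_one, Matrix.diagonal_apply_eq]
      have key : Δ (n + 1) = Δ n * s := by
        rw [← hdetA, ← hdet1, hB, ← hprod, hdet2, hDbdet]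
      rw [eq_div_iff (hΔk n (by omega))]
      linarith [key]
    -- assemble the final matrix
    refine ⟨Lb.submatrix e.symm e.symm, ?_, ?_, ?_⟩
    · intro i
      rcases Fin.eq_castSucc_or_eq_last i with ⟨j, rfl⟩ | rfl
      · have hsymm : e.symm (Fin.castSucc j) = Sum.inl j := by
          rw [hedef]
          exact finSumFinEquiv_symm_apply_castAdd j
        simp only [Matrix.submatrix_apply, hsymm]
        exact hL₁diag j
      · have hsymm : e.symm (Fin.last n) = Sum.inr 0 := by
          rw [hedef]; exact finSumFinEquiv_symm_last
        simp only [Matrix.submatrix_apply, hsymm]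
        rw [hLbdef]
        simp [Matrix.fromBlocks_apply₂₂]
    · intro i j hij
      rcases Fin.eq_castSucc_or_eq_last i with ⟨i', rfl⟩ | rfl
      · rcases Fin.eq_castSucc_or_eq_last j with ⟨j', rfl⟩ | rfl
        · have hsi : e.symm (Fin.castSucc i') = Sum.inl i' := by
            rw [hedef]; exact finSumFinEquiv_symm_apply_castAdd i'
          have hsj : e.symm (Fin.castSucc j') = Sum.inl j' := by
            rw [hedef]; exact finSumFinEquiv_symm_apply_castAdd j'
          simp only [Matrix.submatrix_apply, hsi, hsj]
          exact hL₁tri i' j' (by simpa [Fin.castSucc_lt_castSucc_iff] using hij)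
        · have hsi : e.symm (Fin.castSucc i') = Sum.inl i' := by
            rw [hedef]; exact finSumFinEquiv_symm_apply_castAdd i'
          have hsj : e.symm (Fin.last n) = Sum.inr 0 := by
            rw [hedef]; exact finSumFinEquiv_symm_last
          simp only [Matrix.submatrix_apply, hsi, hsj]
          rw [hLbdef]
          simp [Matrix.fromBlocks_apply₁₂]
      · exact absurd hij (not_lt.mpr (Fin.le_last j))
    · have hdiag : Matrix.diagonal (fun k : Fin (n + 1) => Δ ((k : ℕ) + 1) / Δ (k : ℕ))
          = Db.submatrix e.symm e.symm := by
        rw [hDbdef, Matrix.submatrix_diagonal_equiv]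
        have hfun : (fun k : Fin (n + 1) => Δ ((k : ℕ) + 1) / Δ (k : ℕ))
            = (Sum.elim d (fun _ => s)) ∘ e.symm := by
          funext k
          rcases Fin.eq_castSucc_or_eq_last k with ⟨k', rfl⟩ | rfl
          · have hsk : e.symm (Fin.castSucc k') = Sum.inl k' := by
              rw [hedef]; exact finSumFinEquiv_symm_apply_castAdd k'
            simp only [Function.comp_apply, hsk, Sum.elim_inl, hd_def, Fin.coe_castSucc]
          · have hsk : e.symm (Fin.last n) = Sum.inr 0 := by
              rw [hedef]; exact finSumFinEquiv_symm_last
            simp only [Function.comp_apply, hsk, Sum.elim_inr, Fin.val_last]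
            exact hs.symm
        exact congrArg Matrix.diagonal hfun
      rw [hdiag, Matrix.transpose_submatrix, Matrix.submatrix_mul_equiv,
        Matrix.submatrix_mul_equiv, hprod, ← hB]
      ext i j
      simp [Matrix.submatrix_apply]

theorem hermite_jacobi_reduction
    {n : ℕ} (A : Matrix (Fin n) (Fin n) ℝ) (hA : A.IsSymm)
    (Δ : ℕ → ℝ)
    (hΔ : ∀ (k : ℕ) (h : k ≤ n),
      Δ k = (A.submatrix (Fin.castLE h) (Fin.castLE h)).det)
    (hne : ∀ k : ℕ, 1 ≤ k → k ≤ n → Δ k ≠ 0) :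
    ∃ L : Matrix (Fin n) (Fin n) ℝ,
      (∀ i, L i i = 1) ∧ (∀ i j : Fin n, i < j → L i j = 0) ∧
      A = L * Matrix.diagonal (fun k : Fin n => Δ ((k : ℕ) + 1) / Δ (k : ℕ)) * Lᵀ :=
  hermite_jacobi_aux n A hA Δ hΔ hne
end

section
/- Let K be a field, n a finite type with decidable equality, and A, B : Matrix n n K. Then A and B are similar — i.e., there exists P : Matrix n n K with IsUnit P.det and A * P = P * B — if and only if their characteristic matrices are equivalent over K[X]: there exist U, V : Matrix n n (Polynomial K) with IsUnit U.det and IsUnit V.det such that charmatrix A = U * (charmatrix B) * V. (The content of Weierstrass's 1868 elementary divisor theorem: the invariant factors of the characteristic matrix form a complete system of invariants for similarity.) -/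
open Polynomial Matrix

/-- Right division by a monic linear polynomial in a (possibly noncommutative) ring. -/
theorem aux_right_div {S : Type*} [Ring S] (b : S) (f : Polynomial S) :
    ∃ q : Polynomial S, ∃ r : S, f = q * (X - C b) + C r := by
  generalize hd : f.natDegree = d
  induction d using Nat.strong_induction_on generalizing f with
  | _ d ih =>
    rcases Nat.eq_zero_or_pos d with h0 | hpos
    · subst h0
      exact ⟨0, f.coeff 0, by rw [zero_mul, zero_add, ← eq_C_of_natDegree_eq_zero hd]⟩
    · set a := f.coeff d with ha
      have e1 : C a * X ^ (d - 1) * X = C a * X ^ d := by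
        rw [mul_assoc, ← pow_succ, Nat.sub_add_cancel hpos]
      have e2 : C a * X ^ (d - 1) * C b = C (a * b) * X ^ (d - 1) := by
        rw [mul_assoc, X_pow_mul, ← mul_assoc, ← C_mul]
      have expand : C a * X ^ (d - 1) * (X - C b) = C a * X ^ d - C (a * b) * X ^ (d - 1) := by
        rw [mul_sub, e1, e2]
      set g := f - C a * X ^ (d - 1) * (X - C b) with hg
      have hdegg : g.degree < (d : ℕ) := by
        rw [degree_lt_iff_coeff_zero]
        intro m hm
        rw [hg, expand, coeff_sub, coeff_sub, coeff_C_mul, coeff_C_mul, coeff_X_pow,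
          coeff_X_pow]
        rcases eq_or_lt_of_le hm with hmd | hmd
        · subst hmd
          rw [if_pos rfl, if_neg (by omega : ¬ d = d - 1), mul_one, mul_zero, sub_zero,
            sub_self]
        · have h1 : f.coeff m = 0 := coeff_eq_zero_of_natDegree_lt (hd ▸ hmd)
          rw [h1, if_neg (by omega : ¬ m = d), if_neg (by omega : ¬ m = d - 1), mul_zero,
            mul_zero, sub_zero, sub_zero]
      have hgd : g.natDegree < d := by
        by_cases hg0 : g = 0
        · simpa [hg0] using hpos
        · exact (natDegree_lt_iff_degree_lt hg0).2 hdegg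
      obtain ⟨q, r, hqr⟩ := ih g.natDegree hgd g rfl
      refine ⟨q + C a * X ^ (d - 1), r, ?_⟩
      have hfg : f = g + C a * X ^ (d - 1) * (X - C b) := by rw [hg]; abel
      rw [hfg, hqr]
      noncomm_ring

set_option maxHeartbeats 1000000 in
theorem similar_iff_charmatrix_equivalent
    {K : Type*} [Field K] {n : Type*} [Fintype n] [DecidableEq n]
    (A B : Matrix n n K) :
    (∃ P : Matrix n n K, IsUnit P.det ∧ A * P = P * B) ↔
    (∃ U V : Matrix n n (Polynomial K), IsUnit U.det ∧ IsUnit V.det ∧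
      charmatrix A = U * charmatrix B * V) := by
  cases isEmpty_or_nonempty n with
  | inl h =>
    constructor
    · intro _
      exact ⟨1, 1, by simp, by simp, Subsingleton.elim _ _⟩
    · intro _
      exact ⟨1, by simp, Subsingleton.elim _ _⟩
  | inr h =>
  haveI := h
  constructor
  · rintro ⟨P, hP, hAP⟩
    have hPP : P * P⁻¹ = 1 := mul_nonsing_inv P hP
    have hABP : P * B * P⁻¹ = A := by rw [← hAP, mul_assoc, hPP, mul_one]
    refine ⟨P.map C, P⁻¹.map C, ?_, ?_, ?_⟩
    · rw [← RingHom.mapMatrix_apply, ← RingHom.map_det]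
      exact hP.map C
    · rw [← RingHom.mapMatrix_apply, ← RingHom.map_det]
      exact (isUnit_nonsing_inv_det P hP).map C
    · have hsc : Matrix.scalar n (X : K[X]) * P.map C = P.map C * Matrix.scalar n (X : K[X]) :=
        (Matrix.scalar_commute (X : K[X]) (fun r' => Commute.all _ _) (P.map C)).eq
      show charmatrix A = P.map C * charmatrix B * P⁻¹.map C
      unfold charmatrix
      rw [RingHom.mapMatrix_apply, RingHom.mapMatrix_apply, mul_sub, sub_mul]
      congr 1
      · rw [← hsc, mul_assoc, ← Matrix.map_mul, hPP,
          Matrix.map_one _ C.map_zero C.map_one, mul_one]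
      · rw [← Matrix.map_mul, ← Matrix.map_mul, hABP]
  · rintro ⟨U, V, hU, hV, hE⟩
    obtain ⟨u, rfl⟩ := (isUnit_iff_isUnit_det U).2 hU
    obtain ⟨v, rfl⟩ := (isUnit_iff_isUnit_det V).2 hV
    set U' := matPolyEquiv (u : Matrix n n K[X]) with hU'def
    set U'' := matPolyEquiv ((↑u⁻¹ : Matrix n n K[X])) with hU''def
    set V' := matPolyEquiv (v : Matrix n n K[X]) with hV'def
    set V'' := matPolyEquiv ((↑v⁻¹ : Matrix n n K[X])) with hV''def
    have hu2 : U'' * U' = 1 := by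
      rw [hU'def, hU''def, ← _root_.map_mul, Units.inv_mul, _root_.map_one]
    have hv1 : V' * V'' = 1 := by
      rw [hV'def, hV''def, ← _root_.map_mul, Units.mul_inv, _root_.map_one]
    have h : (X : (Matrix n n K)[X]) - C A = U' * ((X - C B) * V') := by
      have h0 := congrArg matPolyEquiv hE
      rw [_root_.map_mul, _root_.map_mul, matPolyEquiv_charmatrix, matPolyEquiv_charmatrix] at h0
      rw [h0, mul_assoc]
    have hUA : U'' * ((X : (Matrix n n K)[X]) - C A) = (X - C B) * V' := by
      rw [h, ← mul_assoc, hu2, one_mul]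
    have hmon : ((X : (Matrix n n K)[X]) - C B).Monic := monic_X_sub_C B
    set q := U'' /ₘ (X - C B) with hq
    set r := (U'' %ₘ (X - C B)).coeff 0 with hr
    have hrem : U'' %ₘ (X - C B) = C r := by
      apply eq_C_of_degree_le_zero
      have h1 := degree_modByMonic_lt U'' hmon
      rw [degree_X_sub_C] at h1
      exact Nat.WithBot.lt_one_iff_le_zero.1 h1
    have hUdecomp : U'' = (X - C B) * q + C r := by
      conv_lhs => rw [← modByMonic_add_div U'' (X - C B)]
      rw [hrem, add_comm]
    set W := V' - q * ((X : (Matrix n n K)[X]) - C A) with hW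
    have key : C r * ((X : (Matrix n n K)[X]) - C A) = (X - C B) * W := by
      have h1 : (X - C B) * (q * ((X : (Matrix n n K)[X]) - C A)) + C r * (X - C A)
          = (X - C B) * V' := by
        rw [← hUA]
        conv_rhs => rw [hUdecomp]
        rw [add_mul, mul_assoc]
      rw [hW]
      exact (eq_sub_of_add_eq' h1).trans (mul_sub _ _ _).symm
    have hWC : W = C (W.coeff 0) := by
      by_cases hW0 : W = 0
      · rw [hW0]; simp
      · apply eq_C_of_natDegree_eq_zero
        have hlc : ((X : (Matrix n n K)[X]) - C B).leadingCoeff * W.leadingCoeff ≠ 0 := by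
          rw [hmon.leadingCoeff, one_mul]
          exact leadingCoeff_ne_zero.2 hW0
        have hdeg : ((X - C B) * W).natDegree = 1 + W.natDegree := by
          rw [natDegree_mul' hlc, natDegree_X_sub_C]
        have hle : ((X - C B) * W).natDegree ≤ 1 := by
          rw [← key]
          refine le_trans (natDegree_mul_le) ?_
          rw [natDegree_C, natDegree_X_sub_C]
        omega
    set w := W.coeff 0 with hw
    have key2 : C r * X - C (r * A) = C w * X - C (B * w) := by
      have l1 : C r * ((X : (Matrix n n K)[X]) - C A) = C r * X - C (r * A) := by
        rw [mul_sub, ← C_mul]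
      have l2 : ((X : (Matrix n n K)[X]) - C B) * C w = C w * X - C (B * w) := by
        rw [sub_mul, X_mul, ← C_mul]
      rw [← l1, ← l2, key, ← hWC]
    have c1 : ∀ x y : Matrix n n K, ((C x * X - C y : (Matrix n n K)[X])).coeff 1 = x := by
      intro x y
      rw [coeff_sub, coeff_C_mul, coeff_X_one, mul_one, coeff_C]
      simp
    have c0 : ∀ x y : Matrix n n K, ((C x * X - C y : (Matrix n n K)[X])).coeff 0 = -y := by
      intro x y
      rw [coeff_sub, coeff_C_mul, coeff_X_zero, mul_zero, coeff_C]
      simp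
    have hrw : r = w := by
      have h1 := congrArg (fun p => Polynomial.coeff p 1) key2
      rw [c1, c1] at h1
      exact h1
    have hrA : r * A = B * r := by
      have h1 := congrArg (fun p => Polynomial.coeff p 0) key2
      rw [c0, c0] at h1
      have h2 : r * A = B * w := neg_inj.1 h1
      rw [← hrw] at h2
      exact h2
    have hV'eq : V' = q * ((X : (Matrix n n K)[X]) - C A) + C r := by
      have h1 : W = C r := by rw [hWC, ← hrw]
      rw [hW] at h1
      exact sub_eq_iff_eq_add'.1 h1
    have hAV : ((X : (Matrix n n K)[X]) - C A) * V'' = U' * (X - C B) := by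
      calc ((X : (Matrix n n K)[X]) - C A) * V''
          = U' * ((X - C B) * V') * V'' := by rw [← h]
        _ = U' * ((X - C B) * (V' * V'')) := by rw [mul_assoc, mul_assoc]
        _ = U' * (X - C B) := by rw [hv1, mul_one]
    obtain ⟨t, r', hVdecomp⟩ := aux_right_div B V''
    have one_eq : (1 : (Matrix n n K)[X])
        = (q * U' + C r * t) * (X - C B) + C (r * r') := by
      calc (1 : (Matrix n n K)[X]) = V' * V'' := hv1.symm
        _ = (q * ((X : (Matrix n n K)[X]) - C A) + C r) * V'' := by rw [← hV'eq]
        _ = q * (((X : (Matrix n n K)[X]) - C A) * V'') + C r * V'' := by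
            rw [add_mul, mul_assoc]
        _ = q * (U' * (X - C B)) + C r * (t * (X - C B) + C r') := by
            rw [hAV, ← hVdecomp]
        _ = q * U' * (X - C B) + (C r * t * (X - C B) + C r * C r') := by
            rw [mul_add, ← mul_assoc, ← mul_assoc]
        _ = (q * U' + C r * t) * (X - C B) + C (r * r') := by
            rw [← add_assoc, ← add_mul, C_mul]
    set Z := q * U' + C r * t with hZdef
    have hZ : Z = 0 := by
      by_contra hZ0
      have hlc : Z.leadingCoeff * ((X : (Matrix n n K)[X]) - C B).leadingCoeff ≠ 0 := by
        rw [hmon.leadingCoeff, mul_one]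
        exact leadingCoeff_ne_zero.2 hZ0
      have h1 : (Z * ((X : (Matrix n n K)[X]) - C B)).natDegree = Z.natDegree + 1 := by
        rw [natDegree_mul' hlc, natDegree_X_sub_C]
      have h2 : Z * ((X : (Matrix n n K)[X]) - C B) = C (1 - r * r') := by
        rw [map_sub, C_1]
        conv_rhs => rw [one_eq]
        rw [add_sub_cancel_right]
      have h3 : (Z * ((X : (Matrix n n K)[X]) - C B)).natDegree = 0 := by
        rw [h2]; exact natDegree_C _
      omega
    have hrr' : r * r' = 1 := by
      have h1 : C (r * r') = C (1 : Matrix n n K) := by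
        rw [C_1]
        have := one_eq
        rw [hZ, zero_mul, zero_add] at this
        exact this.symm
      exact C_injective h1
    have hr'r : r' * r = 1 := mul_eq_one_comm.1 hrr'
    have hr'unit : IsUnit r' := ⟨⟨r', r, hr'r, hrr'⟩, rfl⟩
    refine ⟨r', (isUnit_iff_isUnit_det r').1 hr'unit, ?_⟩
    calc A * r' = (r' * r) * (A * r') := by rw [hr'r, one_mul]
      _ = r' * (r * A) * r' := by
          rw [mul_assoc, ← mul_assoc r A r', ← mul_assoc]
      _ = r' * (B * r) * r' := by rw [hrA]
      _ = r' * B * (r * r') := by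
          rw [← mul_assoc r' B r, mul_assoc (r' * B) r r']
      _ = r' * B := by rw [hrr', mul_one]
end

section
/- Let K be a field, n a nonempty finite type with decidable equality, and A : Matrix n n K. Then the characteristic polynomial factors as the minimal polynomial times the (normalized, i.e. monic) greatest common divisor of all entries of the adjugate of the characteristic matrix: Matrix.charpoly A = minpoly K A * (Finset.univ : Finset (n × n)).gcd (fun p => (Matrix.adjugate (charmatrix A)) p.1 p.2). (The relation, implicit in Kronecker's 1874 theory of invariant factors, between the characteristic determinant, its first minors, and the last invariant factor.) -/
open Polynomial Matrix

theorem charpoly_eq_minpoly_mul_gcd_adjugate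
    {K : Type*} [Field K] [DecidableEq K]
    {n : Type*} [Fintype n] [DecidableEq n] [Nonempty n]
    (A : Matrix n n K) :
    Matrix.charpoly A =
      minpoly K A *
        (Finset.univ : Finset (n × n)).gcd
          (fun p => (Matrix.adjugate (charmatrix A)) p.1 p.2) := by
  classical
  set M : Matrix n n K[X] := charmatrix A with hM
  set p : K[X] := Matrix.charpoly A with hp
  set m : K[X] := minpoly K A with hm
  set d : K[X] := (Finset.univ : Finset (n × n)).gcd
      (fun q => (Matrix.adjugate M) q.1 q.2) with hd
  have hpmonic : p.Monic := Matrix.charpoly_monic A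
  have hmmonic : m.Monic := minpoly.monic (Matrix.isIntegral A)
  have hmul : Matrix.adjugate M * M = p • (1 : Matrix n n K[X]) := by
    rw [Matrix.adjugate_mul]; rfl
  -- d ≠ 0
  have hd0 : d ≠ 0 := by
    intro h
    have hadj : Matrix.adjugate M = 0 := by
      ext i j : 1
      exact Finset.gcd_eq_zero_iff.mp h (i, j) (Finset.mem_univ _)
    have h2 := hmul
    rw [hadj, zero_mul] at h2
    obtain i := Classical.arbitrary n
    have h3 := congrArg (fun N => N i i) h2
    simp at h3
    exact hpmonic.ne_zero h3.symm
  have hddvd : ∀ i j : n, d ∣ Matrix.adjugate M i j := fun i j => by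
    have := Finset.gcd_dvd (s := (Finset.univ : Finset (n × n))) (f := fun q => Matrix.adjugate M q.1 q.2) (Finset.mem_univ ((i, j) : n × n)); exact this
  -- d ∣ p
  have hdp : d ∣ p := by
    obtain i := Classical.arbitrary n
    have hpe : p = ∑ k, Matrix.adjugate M i k * M k i := by
      have h1 := congrArg (fun N => N i i) hmul
      simpa [Matrix.mul_apply] using h1.symm
    rw [hpe]
    exact Finset.dvd_sum fun k _ => Dvd.dvd.mul_right (hddvd i k) _
  obtain ⟨q, hq⟩ := hdp
  -- B with adjugate M = d • B
  set B : Matrix n n K[X] := Matrix.of fun i j => Matrix.adjugate M i j / d with hB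
  have hdB : Matrix.adjugate M = d • B := by
    ext i j : 1
    simp only [hB, Matrix.smul_apply, Matrix.of_apply, smul_eq_mul]
    exact (EuclideanDomain.mul_div_cancel' hd0 (hddvd i j)).symm
  have hBM : B * M = q • (1 : Matrix n n K[X]) := by
    ext i j : 1
    have h1 := congrArg (fun N => N i j) hmul
    simp only [hdB, Matrix.smul_mul, Matrix.smul_apply, smul_eq_mul, hq] at h1 ⊢
    exact mul_left_cancel₀ hd0 (by simpa [mul_assoc] using h1)
  -- aeval A q = 0, so m ∣ q
  have haq : Polynomial.aeval A q = 0 := by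
    have h : q • (1 : Matrix n n K[X]) = B * charmatrix A := by
      rw [← hM]; exact hBM.symm
    apply_fun matPolyEquiv at h
    simp only [_root_.map_mul, matPolyEquiv_charmatrix, matPolyEquiv_smul_one] at h
    apply_fun fun r => r.eval A at h
    rw [eval_mul_X_sub_C] at h
    rw [eval_map] at h
    exact h
  have hmq : m ∣ q := minpoly.dvd K A haq
  -- m • 1 = M * N for some N
  have hcomm : ∀ a : K[X],
      Commute ((Matrix.scalar n) a) ((C : K →+* K[X]).mapMatrix A) := fun a =>
    Matrix.scalar_commute a (fun r' => Commute.all a r') _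
  set Φ : (K[X])[X] →+* Matrix n n K[X] :=
    Polynomial.eval₂RingHom' (Matrix.scalar n) ((C : K →+* K[X]).mapMatrix A) hcomm with hΦ
  set f : (K[X])[X] := m.map (C : K →+* K[X]) with hf
  have hfeval : f.eval (X : K[X]) = m := by
    rw [hf, eval_map, eval₂_C_X]
  obtain ⟨g, hg⟩ : (X - C (X : K[X])) ∣ f - C m := by
    have h1 := Polynomial.X_sub_C_dvd_sub_C_eval (a := (X : K[X])) (p := f)
    rwa [hfeval] at h1
  have hΦf : Φ f = 0 := by
    have h1 : Φ f = Polynomial.eval₂ ((Matrix.scalar n).comp (C : K →+* K[X]))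
        ((C : K →+* K[X]).mapMatrix A) m := by
      rw [hΦ, hf]
      simp [eval₂RingHom'_apply, eval₂_map]
    have h2 : ((C : K →+* K[X]).mapMatrix : Matrix n n K →+* Matrix n n K[X])
          (Polynomial.aeval A m)
        = Polynomial.eval₂ ((Matrix.scalar n).comp (C : K →+* K[X]))
        ((C : K →+* K[X]).mapMatrix A) m := by
      rw [Polynomial.aeval_def, Polynomial.hom_eval₂]
      congr 1
      ext a i j
      simp [Matrix.algebraMap_matrix_apply, Matrix.scalar_apply, Matrix.diagonal_apply,
        apply_ite (C : K →+* K[X])]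
    rw [h1, ← h2, hm, minpoly.aeval]
    simp
  have hMN : m • (1 : Matrix n n K[X]) = M * Φ g := by
    have h1 := congrArg Φ hg
    have hC : Φ (C m) = m • (1 : Matrix n n K[X]) := by
      simp [hΦ, eval₂RingHom'_apply, Matrix.scalar_apply, Matrix.smul_one_eq_diagonal]
    have hXC : Φ (X - C (X : K[X])) = -M := by
      simp only [map_sub, hΦ, eval₂RingHom'_apply, eval₂_X, eval₂_C]
      rw [hM, charmatrix, Matrix.scalar_apply]
      exact (neg_sub _ _).symm
    rw [map_sub, hΦf, hC, _root_.map_mul, hXC, zero_sub, neg_mul] at h1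
    exact neg_injective h1
  -- p ∣ m * adj entries
  have key : ∀ ij : n × n, p ∣ m * Matrix.adjugate M ij.1 ij.2 := by
    intro ij
    have h1 : m • Matrix.adjugate M = p • Φ g := by
      calc m • Matrix.adjugate M = Matrix.adjugate M * (m • (1 : Matrix n n K[X])) := by
            rw [Matrix.mul_smul, mul_one]
        _ = (Matrix.adjugate M * M) * Φ g := by rw [hMN, mul_assoc]
        _ = p • Φ g := by rw [hmul, Matrix.smul_mul, one_mul]
    have h2 := congrArg (fun N => N ij.1 ij.2) h1
    simp only [Matrix.smul_apply, smul_eq_mul] at h2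
    exact ⟨Φ g ij.1 ij.2, h2⟩
  have hpmd : p ∣ m * d := by
    have h1 : (Finset.univ : Finset (n × n)).gcd
        (fun ij => m * Matrix.adjugate M ij.1 ij.2) = normalize m * d :=
      Finset.gcd_mul_left
    rw [hmmonic.normalize_eq_self] at h1
    rw [← h1]
    exact Finset.dvd_gcd fun ij _ => key ij
  have hmdp : m * d ∣ p := by
    obtain ⟨r, hr⟩ := hmq
    exact ⟨r, by rw [hq, hr]; ring⟩
  have hdmonic : d.Monic := by
    have h1 := Polynomial.monic_normalize (p := d) hd0
    rwa [Finset.normalize_gcd] at h1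
  exact Polynomial.eq_of_monic_of_associated hpmonic (hmmonic.mul hdmonic)
    (associated_of_dvd_dvd hpmd hmdp)
end

section
/- Let n be a finite type with decidable equality, and let A, B : Matrix n n ℝ both be positive definite. Suppose Y, V, W : ℝ → (n → ℝ) satisfy, for all t : ℝ and i : n, HasDerivAt (fun s => Y s i) (V t i) t and HasDerivAt (fun s => V s i) (W t i) t, and for all t, A.mulVec (W t) + B.mulVec (Y t) = 0 (the equations of small oscillations). Then the trajectory is bounded: Bornology.IsBounded (Set.range Y). (Weierstrass's 1858 correction of Lagrange: the small oscillations of a quadratic mechanical system remain bounded whether or not the roots of the characteristic equation are distinct.) -/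
open Matrix

lemma quad_hasDerivAt {n : Type*} [Fintype n] (M : Matrix n n ℝ)
    (X X' : ℝ → n → ℝ) (hX : ∀ t i, HasDerivAt (fun s => X s i) (X' t i) t) (t : ℝ) :
    HasDerivAt (fun s => X s ⬝ᵥ M.mulVec (X s))
      (X' t ⬝ᵥ M.mulVec (X t) + X t ⬝ᵥ M.mulVec (X' t)) t := by
  have h : ∀ s, X s ⬝ᵥ M.mulVec (X s) = ∑ i, X s i * ∑ j, M i j * X s j := by
    intro s; simp [dotProduct, mulVec]
  simp only [h]
  have key : HasDerivAt (fun s => ∑ i, X s i * ∑ j, M i j * X s j)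
      (∑ i, (X' t i * ∑ j, M i j * X t j + X t i * ∑ j, M i j * X' t j)) t := by
    apply HasDerivAt.fun_sum
    intro i _
    exact (hX t i).mul (HasDerivAt.fun_sum fun j _ => (hX t j).const_mul (M i j))
  convert key using 1
  simp [dotProduct, mulVec, Finset.sum_add_distrib]

lemma quad_coercive {n : Type*} [Fintype n] (B : Matrix n n ℝ) (hB : B.PosDef) :
    ∃ m > 0, ∀ x : n → ℝ, m * ‖x‖ ^ 2 ≤ x ⬝ᵥ B.mulVec x := by
  rcases isEmpty_or_nonempty n with hn | hn
  · refine ⟨1, one_pos, fun x => ?_⟩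
    have : x = 0 := Subsingleton.elim _ _
    simp [this]
  · have hcont : Continuous fun x : n → ℝ => x ⬝ᵥ B.mulVec x := by
      simp only [dotProduct, mulVec]
      fun_prop
    have hsph : (Metric.sphere (0 : n → ℝ) 1).Nonempty := by
      refine ⟨fun _ => 1, ?_⟩
      simp [pi_norm_const]
    obtain ⟨u, hu, humin⟩ := (isCompact_sphere (0 : n → ℝ) 1).exists_isMinOn hsph
      hcont.continuousOn
    have hu1 : ‖u‖ = 1 := by simpa using hu
    have hune : u ≠ 0 := by intro h; rw [h] at hu1; simp at hu1
    set m := u ⬝ᵥ B.mulVec u with hm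
    have hmpos : 0 < m := by simpa using hB.dotProduct_mulVec_pos hune
    refine ⟨m, hmpos, fun x => ?_⟩
    rcases eq_or_ne x 0 with rfl | hx
    · simp
    · have hxn : (0:ℝ) < ‖x‖ := norm_pos_iff.mpr hx
      have hv : ‖(‖x‖⁻¹ • x)‖ = 1 := by
        rw [norm_smul]; simp [abs_of_pos hxn, inv_mul_cancel₀ hxn.ne']
      have hvm : m ≤ (‖x‖⁻¹ • x) ⬝ᵥ B.mulVec (‖x‖⁻¹ • x) :=
        humin (by simpa using hv)
      have hexp : (‖x‖⁻¹ • x) ⬝ᵥ B.mulVec (‖x‖⁻¹ • x)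
          = ‖x‖⁻¹ ^ 2 * (x ⬝ᵥ B.mulVec x) := by
        rw [mulVec_smul, smul_dotProduct, dotProduct_smul]
        ring_nf
      rw [hexp] at hvm
      have := mul_le_mul_of_nonneg_left hvm (le_of_lt (pow_pos hxn 2))
      calc m * ‖x‖ ^ 2 = ‖x‖ ^ 2 * m := by ring
        _ ≤ ‖x‖ ^ 2 * (‖x‖⁻¹ ^ 2 * (x ⬝ᵥ B.mulVec x)) := this
        _ = x ⬝ᵥ B.mulVec x := by
            field_simp

theorem small_oscillations_bounded
    {n : Type*} [Fintype n] [DecidableEq n]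
    (A B : Matrix n n ℝ) (hA : A.PosDef) (hB : B.PosDef)
    (Y V W : ℝ → (n → ℝ))
    (hY : ∀ (t : ℝ) (i : n), HasDerivAt (fun s => Y s i) (V t i) t)
    (hV : ∀ (t : ℝ) (i : n), HasDerivAt (fun s => V s i) (W t i) t)
    (heq : ∀ t : ℝ, A.mulVec (W t) + B.mulVec (Y t) = 0) :
    Bornology.IsBounded (Set.range Y) := by
  set E : ℝ → ℝ := fun t => V t ⬝ᵥ A.mulVec (V t) + Y t ⬝ᵥ B.mulVec (Y t) with hE
  have hAT : Aᵀ = A := by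
    rw [← conjTranspose_eq_transpose_of_trivial]; exact hA.1
  have hBT : Bᵀ = B := by
    rw [← conjTranspose_eq_transpose_of_trivial]; exact hB.1
  have hsymA : ∀ x y : n → ℝ, x ⬝ᵥ A.mulVec y = y ⬝ᵥ A.mulVec x := fun x y => by
    rw [dotProduct_mulVec, ← mulVec_transpose, hAT, dotProduct_comm]
  have hsymB : ∀ x y : n → ℝ, x ⬝ᵥ B.mulVec y = y ⬝ᵥ B.mulVec x := fun x y => by
    rw [dotProduct_mulVec, ← mulVec_transpose, hBT, dotProduct_comm]
  have hE' : ∀ t, HasDerivAt E 0 t := by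
    intro t
    have h1 := quad_hasDerivAt A V W hV t
    have h2 := quad_hasDerivAt B Y V hY t
    have := (h1.add h2 : HasDerivAt E _ t)
    refine this.congr_deriv ?_
    have h0 : V t ⬝ᵥ (A.mulVec (W t) + B.mulVec (Y t)) = 0 := by rw [heq]; simp
    rw [dotProduct_add] at h0
    rw [hsymA (W t) (V t), hsymB (V t) (Y t)] at *
    linarith [h0]
  have hconst : ∀ t, E t = E 0 := by
    intro t
    have : ∀ s, HasDerivAt E ((fun _ => (0:ℝ)) s) s := fun s => hE' s
    exact is_const_of_deriv_eq_zero (fun s => (hE' s).differentiableAt)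
      (fun s => (hE' s).deriv) t 0
  obtain ⟨m, hm, hcoer⟩ := quad_coercive B hB
  have hbound : ∀ t, m * ‖Y t‖ ^ 2 ≤ E 0 := by
    intro t
    have h1 : 0 ≤ V t ⬝ᵥ A.mulVec (V t) := by
      have := hA.posSemidef.dotProduct_mulVec_nonneg (V t); simpa using this
    have := hconst t
    have := hcoer (Y t)
    simp only [hE] at *
    linarith
  rw [isBounded_iff_forall_norm_le]
  refine ⟨Real.sqrt (E 0 / m), ?_⟩
  rintro _ ⟨t, rfl⟩
  have h1 : ‖Y t‖ ^ 2 ≤ E 0 / m := by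
    rw [le_div_iff₀ hm]; linarith [hbound t]
  calc ‖Y t‖ = Real.sqrt (‖Y t‖ ^ 2) := by rw [Real.sqrt_sq (norm_nonneg _)]
    _ ≤ Real.sqrt (E 0 / m) := Real.sqrt_le_sqrt h1
end

section
/- Let n be a finite type with decidable equality, and let A, B : Matrix n n ℝ be symmetric. Suppose Y, V, W : ℝ → (n → ℝ) satisfy, for all t : ℝ and i : n, HasDerivAt (fun s => Y s i) (V t i) t and HasDerivAt (fun s => V s i) (W t i) t, and for all t, A.mulVec (W t) + B.mulVec (Y t) = 0 (the equations of small oscillations). Then the energy is conserved: the function t ↦ (V t) ⬝ᵥ A.mulVec (V t) + (Y t) ⬝ᵥ B.mulVec (Y t) is constant on ℝ. (Laplace's 1789 'artifice particulier': the conservation of the vis viva for systems whose coefficients exhibit the mirror symmetry (i,j) = (j,i) and [i,j] = [j,i].) -/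
open Matrix

theorem energy_conservation_small_oscillations
    {n : Type*} [Fintype n] [DecidableEq n]
    (A B : Matrix n n ℝ) (hA : A.IsSymm) (hB : B.IsSymm)
    (Y V W : ℝ → (n → ℝ))
    (hY : ∀ (t : ℝ) (i : n), HasDerivAt (fun s => Y s i) (V t i) t)
    (hV : ∀ (t : ℝ) (i : n), HasDerivAt (fun s => V s i) (W t i) t)
    (heq : ∀ t : ℝ, A.mulVec (W t) + B.mulVec (Y t) = 0) :
    ∀ t₁ t₂ : ℝ,
      (V t₁) ⬝ᵥ A.mulVec (V t₁) + (Y t₁) ⬝ᵥ B.mulVec (Y t₁) =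
      (V t₂) ⬝ᵥ A.mulVec (V t₂) + (Y t₂) ⬝ᵥ B.mulVec (Y t₂) := by
  have quad : ∀ (M : Matrix n n ℝ) (x y : n → ℝ),
      x ⬝ᵥ M.mulVec y = ∑ i, ∑ j, x i * (M i j * y j) := by
    intro M x y
    simp [dotProduct, mulVec, Finset.mul_sum]
  have dquad : ∀ (M : Matrix n n ℝ) (X X' : ℝ → (n → ℝ)),
      (∀ (t : ℝ) (i : n), HasDerivAt (fun s => X s i) (X' t i) t) →
      ∀ t : ℝ, HasDerivAt (fun s => (X s) ⬝ᵥ M.mulVec (X s))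
        ((X' t) ⬝ᵥ M.mulVec (X t) + (X t) ⬝ᵥ M.mulVec (X' t)) t := by
    intro M X X' hX t
    have h : HasDerivAt (fun s => ∑ i, ∑ j, X s i * (M i j * X s j))
        (∑ i, ∑ j, (X' t i * (M i j * X t j) + X t i * (M i j * X' t j))) t := by
      apply HasDerivAt.fun_sum
      intro i _
      apply HasDerivAt.fun_sum
      intro j _
      exact (hX t i).mul ((hX t j).const_mul (M i j))
    have hsum : (∑ i, ∑ j, (X' t i * (M i j * X t j) + X t i * (M i j * X' t j)))
        = (X' t) ⬝ᵥ M.mulVec (X t) + (X t) ⬝ᵥ M.mulVec (X' t) := by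
      rw [quad M (X' t) (X t), quad M (X t) (X' t), ← Finset.sum_add_distrib]
      congr 1; funext i
      rw [← Finset.sum_add_distrib]
    rw [hsum] at h
    exact h.congr_of_eventuallyEq (Filter.Eventually.of_forall fun s => (quad M (X s) (X s)))
  have symmswap : ∀ (M : Matrix n n ℝ), M.IsSymm → ∀ x y : n → ℝ,
      x ⬝ᵥ M.mulVec y = y ⬝ᵥ M.mulVec x := by
    intro M hM x y
    rw [dotProduct_mulVec, ← mulVec_transpose, hM.eq, dotProduct_comm]
  have key : ∀ t, HasDerivAt
      (fun s => (V s) ⬝ᵥ A.mulVec (V s) + (Y s) ⬝ᵥ B.mulVec (Y s)) 0 t := by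
    intro t
    have h := (dquad A V W hV t).add (dquad B Y V hY t)
    have hz : (W t) ⬝ᵥ A.mulVec (V t) + (V t) ⬝ᵥ A.mulVec (W t) +
        ((V t) ⬝ᵥ B.mulVec (Y t) + (Y t) ⬝ᵥ B.mulVec (V t)) = 0 := by
      rw [symmswap A hA (W t) (V t), symmswap B hB (Y t) (V t)]
      have : (V t) ⬝ᵥ (A.mulVec (W t) + B.mulVec (Y t)) = 0 := by
        rw [heq t]; simp
      rw [dotProduct_add] at this
      linarith
    rw [hz] at h
    exact h
  intro t₁ t₂
  exact is_const_of_deriv_eq_zero (fun t => (key t).differentiableAt)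
    (fun t => (key t).deriv) t₁ t₂
end

section
/- Let K be a field, n a finite type with decidable equality, A : Matrix n n K, and λ : K a simple root of the characteristic polynomial: (Matrix.charpoly A).rootMultiplicity λ = 1. Then the adjugate N := Matrix.adjugate (λ • (1 : Matrix n n K) − A) is nonzero, and every column of N is an eigenvector relation: for all j : n, A.mulVec (fun i => N i j) = λ • (fun i => N i j). (The polynomial expression, due to Lagrange 1766 and made explicit by Cauchy 1829, of the solutions of the linear system attached to a simple characteristic root as quotients of minors of the characteristic determinant.) -/
open Polynomial Matrix

theorem adjugate_columns_eigenvectors_of_simple_root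
    {K : Type*} [Field K] {n : Type*} [Fintype n] [DecidableEq n]
    (A : Matrix n n K) (l : K)
    (hl : (Matrix.charpoly A).rootMultiplicity l = 1) :
    Matrix.adjugate (l • (1 : Matrix n n K) - A) ≠ 0 ∧
    ∀ j : n,
      A.mulVec (fun i => Matrix.adjugate (l • (1 : Matrix n n K) - A) i j) =
        l • (fun i => Matrix.adjugate (l • (1 : Matrix n n K) - A) i j) := by
  classical
  set M := l • (1 : Matrix n n K) - A with hM
  set p := Matrix.charpoly A with hp
  have hp0 : p ≠ 0 := A.charpoly_monic.ne_zero
  have hroot : p.IsRoot l := by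
    have : 0 < p.rootMultiplicity l := by omega
    exact (rootMultiplicity_pos hp0).mp this
  have hmap : (charmatrix A).map (evalRingHom l) = M := by
    ext i j
    by_cases h : i = j <;>
      simp [h, charmatrix_apply, diagonal_apply, Matrix.smul_apply, one_apply, Matrix.sub_apply, hM]
  have hdet : M.det = 0 := by
    rw [← hmap, ← RingHom.mapMatrix_apply, ← RingHom.map_det]
    simpa [hp, Matrix.charpoly] using hroot
  -- eigenvector part
  have hMN : M * Matrix.adjugate M = 0 := by
    rw [mul_adjugate, hdet, zero_smul]
  have hAN : A * Matrix.adjugate M = l • Matrix.adjugate M := by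
    have h := hMN
    rw [hM, sub_mul, Matrix.smul_mul, one_mul, sub_eq_zero] at h
    exact h.symm
  -- the quotient q
  set q : K[X] := p /ₘ (X - C l) with hq
  have hpq : (X - C l) * q = p := mul_divByMonic_eq_iff_isRoot.mpr hroot
  have hql : q.eval l ≠ 0 := by
    intro h
    have hd : (X - C l) ∣ q := dvd_iff_isRoot.mpr h
    obtain ⟨r, hr⟩ := hd
    have h2 : (X - C l) ^ 2 ∣ p := ⟨r, by rw [← hpq, hr]; ring⟩
    have := (le_rootMultiplicity_iff hp0).mpr h2
    omega
  refine ⟨?_, ?_⟩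
  · -- nonvanishing of the adjugate
    intro h0
    set B := charmatrix A with hB
    have hNmap : (Matrix.adjugate B).map (evalRingHom l) = Matrix.adjugate M := by
      rw [← hmap]
      exact (evalRingHom l).map_adjugate B
    have hent : ∀ i j, ((Matrix.adjugate B) i j).IsRoot l := by
      intro i j
      have := congrFun (congrFun (hNmap.trans h0) i) j
      simpa [Matrix.map_apply] using this
    set N' : Matrix n n K[X] := Matrix.of fun i j => (Matrix.adjugate B) i j /ₘ (X - C l)
      with hN'
    have hfac : Matrix.adjugate B = (X - C l) • N' := by
      refine Matrix.ext fun i j => ?_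
      simpa [hN', Matrix.smul_apply, smul_eq_mul] using
        (mul_divByMonic_eq_iff_isRoot.mpr (hent i j)).symm
    have hBN : Matrix.adjugate B * B = p • (1 : Matrix n n K[X]) := by
      rw [adjugate_mul]; rfl
    have hcancel : N' * B = q • (1 : Matrix n n K[X]) := by
      have h1 : (X - C l) • (N' * B) = (X - C l) • (q • (1 : Matrix n n K[X])) := by
        rw [← Matrix.smul_mul, ← hfac, hBN, smul_smul, hpq]
      refine Matrix.ext fun i j => ?_
      have := congrFun (congrFun h1 i) j
      simp only [Matrix.smul_apply, smul_eq_mul] at this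
      exact mul_left_cancel₀ (X_sub_C_ne_zero l) this
    have hdetq : N'.det * p = q ^ Fintype.card n := by
      have := congrArg Matrix.det hcancel
      rw [det_mul, det_smul, det_one, mul_one] at this
      simpa [hB, hp, Matrix.charpoly] using this
    have hev : (q.eval l) ^ Fintype.card n = 0 := by
      have := congrArg (eval l) hdetq
      simp only [eval_mul, eval_pow] at this
      rw [← this, show eval l p = 0 from hroot, mul_zero]
    rcases Nat.eq_zero_or_pos (Fintype.card n) with hc | hc
    · rw [hc, pow_zero] at hev
      exact one_ne_zero hev
    · exact hql ((pow_eq_zero_iff hc.ne').mp hev)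
  · intro j
    funext i
    have h := congrFun (congrFun hAN i) j
    simp only [Matrix.mul_apply, Matrix.smul_apply, smul_eq_mul] at h
    simpa [Matrix.mulVec, dotProduct] using h
end

section
/- Let n be a nonempty finite type with decidable equality and let A : Matrix n n ℝ be symmetric. Then there exists x : n → ℝ with x ⬝ᵥ x = 1 such that: (i) x maximizes the quadratic form on the unit sphere, i.e., for all y with y ⬝ᵥ y = 1 one has y ⬝ᵥ A.mulVec y ≤ x ⬝ᵥ A.mulVec x; (ii) x is an eigenvector with the maximum as eigenvalue, A.mulVec x = (x ⬝ᵥ A.mulVec x) • x; and (iii) the maximum value is a root of the characteristic polynomial, (Matrix.charpoly A).IsRoot (x ⬝ᵥ A.mulVec x). (Cauchy's 1829 variational approach: the maxima and minima of a homogeneous function of the second degree subject to x₁² + x₂² + ⋯ = 1 are roots of the equation S = 0, the same equation that occurs in the theory of the secular inequalities of the planets.) -/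
open Polynomial Matrix

theorem cauchy_variational_max_eigenvalue
    {n : Type*} [Fintype n] [DecidableEq n] [Nonempty n]
    (A : Matrix n n ℝ) (hA : A.IsSymm) :
    ∃ x : n → ℝ, x ⬝ᵥ x = 1 ∧
      (∀ y : n → ℝ, y ⬝ᵥ y = 1 → y ⬝ᵥ A.mulVec y ≤ x ⬝ᵥ A.mulVec x) ∧
      A.mulVec x = (x ⬝ᵥ A.mulVec x) • x ∧
      (Matrix.charpoly A).IsRoot (x ⬝ᵥ A.mulVec x) := by
  have hA' : A.IsHermitian := by
    have : Aᴴ = Aᵀ := by ext i j; simp [conjTranspose_apply]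
    rw [Matrix.IsHermitian, this]; exact hA
  obtain ⟨i₀, hi₀⟩ := Finite.exists_max hA'.eigenvalues
  set μ := hA'.eigenvalues i₀ with hμ
  set x : n → ℝ := ⇑(hA'.eigenvectorBasis i₀) with hx
  have hunit : x ⬝ᵥ x = 1 := by
    have h1 := hA'.eigenvectorBasis.orthonormal.1 i₀
    have h2 : (inner ℝ (hA'.eigenvectorBasis i₀) (hA'.eigenvectorBasis i₀) : ℝ) = 1 := by
      rw [real_inner_self_eq_norm_sq, h1]; norm_num
    rw [EuclideanSpace.inner_eq_star_dotProduct] at h2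
    simpa using h2
  have heig : A.mulVec x = μ • x := hA'.mulVec_eigenvectorBasis i₀
  have hval : x ⬝ᵥ A.mulVec x = μ := by
    rw [heig, dotProduct_smul, hunit]; simp
  refine ⟨x, hunit, ?_, ?_, ?_⟩
  · -- maximization
    intro y hy
    rw [hval]
    set U : Matrix n n ℝ := (hA'.eigenvectorUnitary : Matrix n n ℝ) with hU
    have hspec := hA'.spectral_theorem
    have hstar : star U = Uᵀ := by ext i j; simp [conjTranspose_apply]
    set c : n → ℝ := (star U) *ᵥ y with hc
    have hcy : c = Uᵀ *ᵥ y := by rw [hc, hstar]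
    have hcc : c ⬝ᵥ c = 1 := by
      calc c ⬝ᵥ c = ((Uᵀ *ᵥ y) ᵥ* Uᵀ) ⬝ᵥ y := by rw [hcy, dotProduct_mulVec]
        _ = ((U * Uᵀ) *ᵥ y) ⬝ᵥ y := by rw [vecMul_transpose, mulVec_mulVec]
        _ = 1 := by
            rw [← hstar, (Matrix.mem_unitaryGroup_iff).mp hA'.eigenvectorUnitary.2,
              one_mulVec, hy]
    have hvm : y ᵥ* U = c := by rw [hcy, mulVec_transpose]
    have hquad : y ⬝ᵥ A.mulVec y = ∑ i, hA'.eigenvalues i * (c i)^2 := by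
      conv_lhs => rw [hspec, Unitary.conjStarAlgAut_apply, ← hU]
      rw [← mulVec_mulVec, ← mulVec_mulVec, dotProduct_mulVec]
      rw [hvm, ← hc]
      simp only [dotProduct, mulVec_diagonal, Function.comp, RCLike.ofReal_real_eq_id, id]
      exact Finset.sum_congr rfl fun i _ => by ring
    rw [hquad]
    calc ∑ i, hA'.eigenvalues i * (c i)^2 ≤ ∑ i, μ * (c i)^2 := by
          apply Finset.sum_le_sum
          intro i _
          exact mul_le_mul_of_nonneg_right (hi₀ i) (sq_nonneg _)
      _ = μ := by
          rw [← Finset.mul_sum]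
          have : ∑ i, (c i)^2 = 1 := by
            rw [← hcc]; simp [dotProduct, sq]
          rw [this, mul_one]
  · rw [hval]; exact heig
  · rw [hval]
    have heval : (Matrix.charpoly A).eval μ = ((μ • (1 : Matrix n n ℝ)) - A).det := by
      rw [Matrix.charpoly, ← Polynomial.coe_evalRingHom, RingHom.map_det]
      congr 1
      ext i j
      by_cases h : i = j <;>
        simp [h, charmatrix_apply, RingHom.mapMatrix_apply, Matrix.one_apply, diagonal]
    rw [Polynomial.IsRoot, heval]
    rw [← Matrix.exists_mulVec_eq_zero_iff]
    refine ⟨x, by simpa [hx] using hA'.eigenvectorBasis.orthonormal.ne_zero i₀, ?_⟩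
    rw [sub_mulVec, heig, smul_mulVec, one_mulVec, sub_self]
end

section
/- Let n be a finite type with decidable equality, A : Matrix n n ℂ, and Y : ℝ → (n → ℂ) a solution of the first-order linear system: for all t : ℝ and i : n, HasDerivAt (fun s => Y s i) ((A.mulVec (Y t)) i) t. Let R := ((Matrix.charpoly A).roots).toFinset. Then for each coordinate i : n there is a family of polynomials p : ℂ → Polynomial ℂ such that (p λ).degree < ((Matrix.charpoly A).rootMultiplicity λ : ℕ) for every λ ∈ R, and for all t : ℝ, Y t i = Σ_{λ ∈ R} (p λ).eval (t : ℂ) * Complex.exp (λ * t). (Jordan's 1871 solution of linear constant-coefficient differential systems: each coordinate of a solution is e^{σt}·ψ(t) summed over the characteristic roots σ, with ψ a polynomial of degree less than the multiplicity of σ.) -/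
open Polynomial

noncomputable def pAntideriv (p : ℂ[X]) : ℂ[X] :=
  ∑ k ∈ Finset.range (p.natDegree + 1), C (p.coeff k / (k + 1)) * X ^ (k + 1)

lemma pAntideriv_deriv (p : ℂ[X]) : derivative (pAntideriv p) = p := by
  unfold pAntideriv
  rw [map_sum]
  conv_rhs => rw [p.as_sum_range]
  refine Finset.sum_congr rfl fun k _ => ?_
  have hk : ((k : ℂ) + 1) ≠ 0 := by
    have := (Nat.cast_ne_zero (R := ℂ)).mpr (Nat.succ_ne_zero k)
    push_cast at this
    exact this
  rw [derivative_C_mul, derivative_X_pow, ← mul_assoc, ← C_mul, Nat.add_sub_cancel,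
    C_mul_X_pow_eq_monomial]
  congr 1
  push_cast
  rw [div_mul_cancel₀ _ hk]

lemma pAntideriv_degree {p : ℂ[X]} {m : ℕ} (h : p.degree < (m : ℕ)) :
    (pAntideriv p).degree < ((m + 1 : ℕ) : WithBot ℕ) := by
  rw [degree_lt_iff_coeff_zero] at h ⊢
  intro j hj
  unfold pAntideriv
  rw [finset_sum_coeff]
  refine Finset.sum_eq_zero fun k _ => ?_
  rw [coeff_C_mul, coeff_X_pow]
  by_cases hk : j = k + 1
  · have : m ≤ k := by omega
    rw [h k this, if_pos hk]
    simp
  · rw [if_neg hk, mul_zero]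

noncomputable def solveAux (c : ℂ) (p : ℂ[X]) : ℂ[X] :=
  ∑ k ∈ Finset.range (p.natDegree + 1), C ((-1) ^ k / c ^ (k + 1)) * derivative^[k] p

lemma solveAux_spec {c : ℂ} (hc : c ≠ 0) (p : ℂ[X]) :
    derivative (solveAux c p) + C c * solveAux c p = p := by
  unfold solveAux
  rw [map_sum, Finset.mul_sum, ← Finset.sum_add_distrib]
  have key : ∀ k, derivative (C ((-1) ^ k / c ^ (k + 1)) * derivative^[k] p)
      + C c * (C ((-1) ^ k / c ^ (k + 1)) * derivative^[k] p)
      = C ((-1) ^ k / c ^ k) * derivative^[k] p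
        - C ((-1) ^ (k + 1) / c ^ (k + 1)) * derivative^[k + 1] p := by
    intro k
    rw [derivative_C_mul, ← mul_assoc, ← C_mul]
    have h1 : c * ((-1) ^ k / c ^ (k + 1)) = (-1) ^ k / c ^ k := by
      field_simp
      ring
    have h2 : ((-1 : ℂ)) ^ (k + 1) / c ^ (k + 1) = -((-1) ^ k / c ^ (k + 1)) := by
      rw [pow_succ]
      ring
    rw [h1, h2, map_neg, Function.iterate_succ_apply']
    ring
  rw [Finset.sum_congr rfl fun k _ => key k, Finset.sum_range_sub']
  have : derivative^[p.natDegree + 1] p = 0 :=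
    Polynomial.iterate_derivative_eq_zero (Nat.lt_succ_self _)
  simp [this]

lemma solveAux_degree (c : ℂ) (p : ℂ[X]) : (solveAux c p).degree ≤ p.degree := by
  unfold solveAux
  refine (degree_sum_le _ _).trans ?_
  rw [Finset.sup_le_iff]
  intro k hk
  clear hk
  refine (degree_mul_le _ _).trans ?_
  have h2 : (derivative^[k] p).degree ≤ p.degree := by
    induction k with
    | zero => exact le_refl _
    | succ k ih =>
      exact le_trans (by rw [Function.iterate_succ_apply']; exact degree_derivative_le) ih
  calc (C ((-1) ^ k / c ^ (k + 1))).degree + (derivative^[k] p).degree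
      ≤ 0 + p.degree := add_le_add degree_C_le h2
    _ = p.degree := zero_add _

lemma hasDerivAt_cexp_real (c : ℂ) (t : ℝ) :
    HasDerivAt (fun s : ℝ => Complex.exp (c * s)) (c * Complex.exp (c * t)) t := by
  have h : HasDerivAt (fun z : ℂ => Complex.exp (c * z)) (c * Complex.exp (c * t)) (t : ℂ) := by
    have h1 : HasDerivAt (fun z : ℂ => c * z) c (t : ℂ) := by
      simpa using (hasDerivAt_id (t : ℂ)).const_mul c
    have := HasDerivAt.comp (t : ℂ) (Complex.hasDerivAt_exp (c * (t : ℂ))) h1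
    simpa [Function.comp_def, mul_comm] using this
  exact h.comp_ofReal

lemma hasDerivAt_expTerm (q : ℂ[X]) (μ : ℂ) (t : ℝ) :
    HasDerivAt (fun s : ℝ => q.eval (s : ℂ) * Complex.exp (μ * s))
      (((derivative q).eval (t : ℂ) + μ * q.eval (t : ℂ)) * Complex.exp (μ * t)) t := by
  have h1 : HasDerivAt (fun s : ℝ => q.eval (s : ℂ)) ((derivative q).eval (t : ℂ)) t :=
    (q.hasDerivAt (t : ℂ)).comp_ofReal
  have h2 : HasDerivAt (fun s : ℝ => Complex.exp (μ * s)) (μ * Complex.exp (μ * t)) t := by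
    have inner : HasDerivAt (fun z : ℂ => Complex.exp (μ * z))
        (Complex.exp (μ * (t : ℂ)) * μ) (t : ℂ) := by
      have := (Complex.hasDerivAt_exp (μ * (t : ℂ))).comp (t : ℂ)
        ((hasDerivAt_id (t : ℂ)).const_mul μ)
      simpa [Function.comp_def, mul_one] using this
    have := inner.comp_ofReal
    simpa [mul_comm] using this
  have := h1.fun_mul h2
  convert this using 1
  · rfl
  ring

lemma eq_zero_of_hasDerivAt_lam {lam : ℂ} {h : ℝ → ℂ}
    (hd : ∀ t, HasDerivAt h (lam * h t) t) (h0 : h 0 = 0) : ∀ t, h t = 0 := by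
  set u : ℝ → ℂ := fun t => h t * Complex.exp (-lam * t) with hu_def
  have hu : ∀ t : ℝ, HasDerivAt u 0 t := by
    intro t
    have he : HasDerivAt (fun s : ℝ => Complex.exp (-lam * s))
        (-lam * Complex.exp (-lam * t)) t := hasDerivAt_cexp_real (-lam) t
    have := (hd t).fun_mul he
    convert this using 1
    · rfl
    ring
  have hconst := is_const_of_deriv_eq_zero (𝕜 := ℝ) (f := u)
    (fun t => (hu t).differentiableAt) (fun t => (hu t).deriv)
  intro t
  have hut : u t = 0 := by
    rw [hconst t 0]
    simp [hu_def, h0]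
  have hexp : Complex.exp (-lam * t) ≠ 0 := Complex.exp_ne_zero _
  have : h t * Complex.exp (-lam * t) = 0 := hut
  exact (mul_eq_zero.mp this).resolve_right hexp

inductive SolChain : Multiset ℂ → (ℝ → ℂ) → Prop
  | nil (f : ℝ → ℂ) (hf : ∀ t, f t = 0) : SolChain 0 f
  | cons (lam : ℂ) (M : Multiset ℂ) (f g : ℝ → ℂ) (hg : SolChain M g)
      (hf : ∀ t, HasDerivAt f (lam * f t + g t) t) : SolChain (lam ::ₘ M) f

def IsExpSum (M : Multiset ℂ) (f : ℝ → ℂ) : Prop :=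
  ∃ p : ℂ → ℂ[X], (∀ μ : ℂ, (p μ).degree < ((M.count μ : ℕ) : WithBot ℕ)) ∧
    ∀ t : ℝ, f t = ∑ μ ∈ M.toFinset, (p μ).eval (t : ℂ) * Complex.exp (μ * t)

theorem SolChain.isExpSum {M : Multiset ℂ} {f : ℝ → ℂ} (h : SolChain M f) : IsExpSum M f := by
  induction h with
  | nil f hf =>
    refine ⟨fun _ => 0, fun μ => ?_, fun t => by simp [hf t]⟩
    simp only [degree_zero, Multiset.count_zero, Nat.cast_zero]
    exact bot_lt_iff_ne_bot.mpr (by simp)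
  | cons lam M f g hg hf IH =>
    obtain ⟨p, hdeg, hsum⟩ := IH
    set S : Finset ℂ := insert lam M.toFinset with hS_def
    have hg' : ∀ t : ℝ, g t = ∑ μ ∈ S, (p μ).eval (t : ℂ) * Complex.exp (μ * t) := by
      intro t
      rw [hsum t, hS_def]
      by_cases hlam : lam ∈ M.toFinset
      · rw [Finset.insert_eq_self.mpr hlam]
      · rw [Finset.sum_insert_of_eq_zero_if_notMem]
        intro _
        have hc : M.count lam = 0 := Multiset.count_eq_zero.mpr (by
          simpa [Multiset.mem_toFinset] using hlam)
        have := hdeg lam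
        rw [hc, Nat.cast_zero, Nat.WithBot.lt_zero_iff, degree_eq_bot] at this
        simp [this]
    set q0 : ℂ → ℂ[X] := fun μ =>
      if μ = lam then pAntideriv (p lam) else solveAux (μ - lam) (p μ) with hq0_def
    set F0 : ℝ → ℂ := fun t => ∑ μ ∈ S, (q0 μ).eval (t : ℂ) * Complex.exp (μ * t) with hF0_def
    have keyq : ∀ (μ : ℂ) (t : ℝ), (derivative (q0 μ)).eval (t : ℂ)
        + (μ - lam) * (q0 μ).eval (t : ℂ) = (p μ).eval (t : ℂ) := by
      intro μ t
      by_cases hμ : μ = lam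
      · subst hμ
        simp [hq0_def, pAntideriv_deriv]
      · have hc : μ - lam ≠ 0 := sub_ne_zero.mpr hμ
        have := congrArg (Polynomial.eval (t : ℂ)) (solveAux_spec hc (p μ))
        simp only [eval_add, eval_mul, eval_C] at this
        simpa [hq0_def, hμ] using this
    have hF0 : ∀ t : ℝ, HasDerivAt F0 (lam * F0 t + g t) t := by
      intro t
      have hder : HasDerivAt F0 (∑ μ ∈ S, ((derivative (q0 μ)).eval (t : ℂ)
          + μ * (q0 μ).eval (t : ℂ)) * Complex.exp (μ * t)) t := by
        simp only [hF0_def]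
        exact HasDerivAt.fun_sum (fun μ _ => hasDerivAt_expTerm (q0 μ) μ t)
      convert hder using 1
      rw [hg' t, hF0_def, Finset.mul_sum, ← Finset.sum_add_distrib]
      refine Finset.sum_congr rfl fun μ _ => ?_
      have := keyq μ t
      linear_combination (-Complex.exp (μ * (t : ℂ))) * this
    set c0 : ℂ := f 0 - F0 0 with hc0_def
    have hexp : ∀ t : ℝ, HasDerivAt (fun s : ℝ => c0 * Complex.exp (lam * s))
        (lam * (c0 * Complex.exp (lam * t))) t := by
      intro t
      have := (hasDerivAt_cexp_real lam t).const_mul c0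
      convert this using 1
      · rfl
      ring
    have h2 : ∀ t : ℝ, f t - F0 t - c0 * Complex.exp (lam * t) = 0 := by
      apply eq_zero_of_hasDerivAt_lam (lam := lam)
        (h := fun t => f t - F0 t - c0 * Complex.exp (lam * t))
      · intro t
        have := ((hf t).fun_sub (hF0 t)).fun_sub (hexp t)
        convert this using 1
        · rfl
        ring
      · simp [hc0_def]
    have hf_eq : ∀ t : ℝ, f t = F0 t + c0 * Complex.exp (lam * t) := by
      intro t
      have := h2 t
      rw [sub_sub, sub_eq_zero] at this
      exact this
    refine ⟨fun μ => if μ = lam then pAntideriv (p lam) + C c0 else solveAux (μ - lam) (p μ),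
      ?_, ?_⟩
    · intro μ
      by_cases hμ : μ = lam
      · subst hμ
        simp only [if_pos rfl, Multiset.count_cons_self]
        refine lt_of_le_of_lt (degree_add_le _ _) (max_lt ?_ ?_)
        · exact pAntideriv_degree (hdeg μ)
        · refine lt_of_le_of_lt degree_C_le ?_
          exact_mod_cast Nat.succ_pos _
      · simp only [if_neg hμ, Multiset.count_cons_of_ne hμ]
        exact lt_of_le_of_lt (solveAux_degree _ _) (hdeg μ)
    · intro t
      rw [Multiset.toFinset_cons, ← hS_def, hf_eq t, hF0_def]
      have split : ∀ μ ∈ S, (if μ = lam then pAntideriv (p lam) + C c0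
          else solveAux (μ - lam) (p μ)).eval (t : ℂ) * Complex.exp (μ * t)
          = (q0 μ).eval (t : ℂ) * Complex.exp (μ * t)
            + (if μ = lam then c0 * Complex.exp (μ * t) else 0) := by
        intro μ _
        by_cases hμ : μ = lam
        · subst hμ
          simp [hq0_def]
          ring
        · simp [hq0_def, hμ]
      rw [Finset.sum_congr rfl split, Finset.sum_add_distrib, Finset.sum_ite_eq' S lam]
      simp [hS_def]

open Matrix

lemma solChain_of_annihilates {n : Type*} [Fintype n] [DecidableEq n]
    (A : Matrix n n ℂ) (Y : ℝ → (n → ℂ))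
    (hY : ∀ (t : ℝ) (i : n), HasDerivAt (fun s => Y s i) ((A.mulVec (Y t)) i) t) :
    ∀ (L : List ℂ) (B : Matrix n n ℂ),
      (∀ t : ℝ, (B * (L.map (fun μ => A - μ • 1)).prod).mulVec (Y t) = 0) →
      ∀ i : n, SolChain (↑L) (fun t => (B.mulVec (Y t)) i) := by
  intro L
  induction L with
  | nil =>
    intro B hB i
    rw [Multiset.coe_nil]
    refine SolChain.nil _ fun t => ?_
    have := congrFun (hB t) i
    simpa using this
  | cons lam L IH =>
    intro B hB i
    rw [← Multiset.cons_coe]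
    have hB' : ∀ t : ℝ,
        ((B * (A - lam • 1)) * (L.map (fun μ => A - μ • 1)).prod).mulVec (Y t) = 0 := by
      intro t
      have := hB t
      rwa [List.map_cons, List.prod_cons, ← mul_assoc] at this
    have hgchain := IH (B * (A - lam • 1)) hB' i
    refine SolChain.cons lam (↑L) _ _ hgchain ?_
    intro t
    have hder : HasDerivAt (fun s => (B.mulVec (Y s)) i)
        (∑ j, B i j * (A.mulVec (Y t)) j) t := by
      have hfun : (fun s => (B.mulVec (Y s)) i) = fun s => ∑ j, B i j * Y s j := by
        funext s
        simp [Matrix.mulVec, dotProduct]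
      rw [hfun]
      exact HasDerivAt.fun_sum (fun j _ => (hY t j).const_mul (B i j))
    convert hder using 1
    have hsum : ∑ j, B i j * (A.mulVec (Y t)) j = ((B * A).mulVec (Y t)) i := by
      rw [← Matrix.mulVec_mulVec]
      simp [Matrix.mulVec, dotProduct]
    rw [hsum]
    have hBA : B * (A - lam • 1) = B * A - lam • B := by
      rw [mul_sub, Matrix.mul_smul, mul_one]
    rw [hBA, Matrix.sub_mulVec, Matrix.smul_mulVec]
    simp only [Pi.sub_apply, Pi.smul_apply, smul_eq_mul]
    ring

theorem jordan_solution_linear_ode_system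
    {n : Type*} [Fintype n] [DecidableEq n]
    (A : Matrix n n ℂ) (Y : ℝ → (n → ℂ))
    (hY : ∀ (t : ℝ) (i : n), HasDerivAt (fun s => Y s i) ((A.mulVec (Y t)) i) t) :
    ∀ i : n, ∃ p : ℂ → Polynomial ℂ,
      (∀ l ∈ ((Matrix.charpoly A).roots).toFinset,
        (p l).degree < ((Matrix.charpoly A).rootMultiplicity l : WithBot ℕ)) ∧
      ∀ t : ℝ, Y t i =
        ∑ l ∈ ((Matrix.charpoly A).roots).toFinset,
          (p l).eval (t : ℂ) * Complex.exp (l * t) := by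
  intro i
  set L : List ℂ := A.charpoly.roots.toList with hL_def
  have hL : (L : Multiset ℂ) = A.charpoly.roots := Multiset.coe_toList _
  have hsplit : A.charpoly = (A.charpoly.roots.map (fun a => X - C a)).prod :=
    (IsAlgClosed.splits _).eq_prod_roots_of_monic A.charpoly_monic
  have hsplit' : A.charpoly = (L.map (fun a => X - C a)).prod := by
    rw [hsplit, ← hL, Multiset.map_coe, Multiset.prod_coe]
  have hprod : (L.map (fun μ => A - μ • 1)).prod = 0 := by
    have hcomp : (aeval A (R := ℂ)) ∘ (fun a : ℂ => X - C a) = fun μ : ℂ => A - μ • 1 := by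
      funext a
      simp [Algebra.algebraMap_eq_smul_one]
    have heq : (L.map (fun μ => A - μ • 1)).prod = aeval A A.charpoly := by
      conv_rhs => rw [hsplit']
      rw [map_list_prod, List.map_map, hcomp]
    rw [heq, Matrix.aeval_self_charpoly]
  have hchain := solChain_of_annihilates A Y hY L 1
    (fun t => by rw [one_mul, hprod, Matrix.zero_mulVec]) i
  rw [hL] at hchain
  have hchain' : SolChain A.charpoly.roots (fun t => Y t i) := by
    simpa [Matrix.one_mulVec] using hchain
  obtain ⟨p, hdeg, hsum⟩ := hchain'.isExpSum
  refine ⟨p, fun l _ => ?_, hsum⟩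
  have := hdeg l
  rwa [Polynomial.count_roots] at this
end

section
/- Let n be a finite type with decidable equality and A : Matrix n n ℂ. Then A is diagonalizable — i.e., there exists an invertible P : Matrix n n ℂ and d : n → ℂ with P⁻¹ * A * P = Matrix.diagonal d — if and only if for every μ : ℂ the algebraic multiplicity equals the geometric multiplicity: (Matrix.charpoly A).rootMultiplicity μ = finrank ℂ (Module.End.eigenspace A.mulVecLin μ). (Jordan's 1871 criterion, in response to Yvon-Villarceau, for a linear system to reduce to distinct equations dyᵢ/dt = σyᵢ that can be integrated separately: each characteristic root of multiplicity μ must annihilate the appropriate minors of the characteristic determinant, i.e., have an eigenspace of full dimension μ.) -/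
open Polynomial Matrix

section Aux

variable {n : Type*} [Fintype n] [DecidableEq n]

/-- finrank of an independent finite supremum is the sum of finranks. -/
private lemma finrank_biSup_eq_sum {V : Type*} [AddCommGroup V] [Module ℂ V]
    [FiniteDimensional ℂ V] (p : ℂ → Submodule ℂ V) (hp : iSupIndep p)
    (s : Finset ℂ) :
    Module.finrank ℂ ↥(⨆ μ ∈ s, p μ) = ∑ μ ∈ s, Module.finrank ℂ (p μ) := by
  classical
  induction s using Finset.induction_on with
  | empty => simp
  | @insert a s ha ih =>
    have hsup : (⨆ μ ∈ insert a s, p μ) = p a ⊔ ⨆ μ ∈ s, p μ :=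
      Finset.iSup_insert a s p
    have hdisj : Disjoint (p a) (⨆ μ ∈ (s : Set ℂ), p μ) :=
      hp.disjoint_biSup (by exact_mod_cast ha)
    have hdisj' : Disjoint (p a) (⨆ μ ∈ s, p μ) := by
      simpa using hdisj
    have h0 : Module.finrank ℂ ↥(p a ⊓ ⨆ μ ∈ s, p μ) = 0 := by
      rw [hdisj'.eq_bot]; exact finrank_bot ℂ V
    have := Submodule.finrank_sup_add_finrank_inf_eq (p a) (⨆ μ ∈ s, p μ)
    rw [h0, add_zero] at this
    rw [hsup, this, ih, Finset.sum_insert ha]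

private lemma toMatrix_mulVecLin (A : Matrix n n ℂ) :
    LinearMap.toMatrix (Pi.basisFun ℂ n) (Pi.basisFun ℂ n) A.mulVecLin = A := by
  ext i j
  simp [LinearMap.toMatrix_apply, Matrix.mulVecLin_apply, Matrix.mulVec_single]

/-- From an eigenbasis, both multiplicities are the number of indices with `d i = μ`. -/
private lemma mult_of_eigenbasis (A : Matrix n n ℂ) (b : Module.Basis n ℂ (n → ℂ)) (d : n → ℂ)
    (h : ∀ i, A.mulVecLin (b i) = d i • b i) (μ : ℂ) :
    (Matrix.charpoly A).rootMultiplicity μ =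
      Module.finrank ℂ (Module.End.eigenspace A.mulVecLin μ) := by
  classical
  set f := A.mulVecLin
  -- the matrix of f in basis b is diagonal
  have hM : LinearMap.toMatrix b b f = diagonal d := by
    ext i j
    rw [LinearMap.toMatrix_apply, h j, LinearEquiv.map_smul]
    by_cases hij : i = j
    · subst hij; simp [Module.Basis.repr_self]
    · simp [Module.Basis.repr_self, Finsupp.single_apply, Matrix.diagonal_apply, hij, Ne.symm hij]
  -- characteristic polynomial
  have hchar : A.charpoly = ∏ i, (X - C (d i)) := by
    have h1 : A.charpoly = f.charpoly := by
      rw [← toMatrix_mulVecLin A, LinearMap.charpoly_toMatrix]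
    have h2 : f.charpoly = (diagonal d).charpoly := by
      rw [← hM, LinearMap.charpoly_toMatrix]
    have h3 : charmatrix (diagonal d) = diagonal (fun i => X - C (d i)) := by
      ext i j
      by_cases hij : i = j <;>
        simp [charmatrix_apply, Matrix.diagonal_apply, hij]
    rw [h1, h2, Matrix.charpoly, h3, Matrix.det_diagonal]
  -- algebraic multiplicity
  have halg : A.charpoly.rootMultiplicity μ =
      (Finset.univ.filter fun i => d i = μ).card := by
    have hroots : A.charpoly.roots = Finset.univ.val.map d := by
      rw [hchar, Finset.prod_eq_multiset_prod,
        show (fun i => X - C (d i)) = ((fun a => X - (C a : ℂ[X])) ∘ d) from rfl,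
        ← Multiset.map_map, roots_multiset_prod_X_sub_C]
    rw [← count_roots, hroots, Multiset.count_map]
    rw [Finset.card_filter, Finset.sum_boole]
    simp [Finset.filter, eq_comm]
  -- geometric multiplicity
  have hspan : Module.End.eigenspace f μ
      = Submodule.span ℂ (⇑b '' {i | d i = μ}) := by
    apply le_antisymm
    · intro x hx
      have hfx : f x = μ • x := Module.End.mem_eigenspace_iff.mp hx
      set c := ⇑(b.repr x) with hc
      have hxsum : x = ∑ i, c i • b i := (b.sum_repr x).symm
      have h1 : f x = ∑ j, (d j * c j) • b j := by
        rw [hxsum, map_sum]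
        refine Finset.sum_congr rfl fun j _ => ?_
        rw [LinearMap.map_smul, h j, smul_smul, mul_comm]
      have h2 : f x = ∑ j, (μ * c j) • b j := by
        rw [hfx, hxsum, Finset.smul_sum]
        refine Finset.sum_congr rfl fun j _ => ?_
        rw [smul_smul]
      have hcoords : ∀ i, d i * c i = μ * c i := by
        intro i
        have e1 := b.repr_sum_self (fun j => d j * c j)
        have e2 := b.repr_sum_self (fun j => μ * c j)
        rw [← h1] at e1
        rw [← h2] at e2
        exact congrFun (e1.symm.trans e2) i
      have hzero : ∀ i, d i ≠ μ → c i = 0 := by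
        intro i hi
        have := hcoords i
        rcases mul_eq_mul_right_iff.mp this with h' | h'
        · exact absurd h' hi
        · exact h'
      rw [hxsum]
      refine Submodule.sum_mem _ fun i _ => ?_
      by_cases hdi : d i = μ
      · exact Submodule.smul_mem _ _ (Submodule.subset_span ⟨i, hdi, rfl⟩)
      · rw [hzero i hdi, zero_smul]; exact Submodule.zero_mem _
    · rw [Submodule.span_le]
      rintro - ⟨i, hi, rfl⟩
      rw [SetLike.mem_coe, Module.End.mem_eigenspace_iff, h i, hi]
  have hgeo : Module.finrank ℂ (Module.End.eigenspace f μ)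
      = (Finset.univ.filter fun i => d i = μ).card := by
    rw [hspan]
    have hv : Set.range (fun i : {i // d i = μ} => b i) = ⇑b '' {i | d i = μ} := by
      ext x
      constructor
      · rintro ⟨i, rfl⟩; exact ⟨i, i.2, rfl⟩
      · rintro ⟨i, hi, rfl⟩; exact ⟨⟨i, hi⟩, rfl⟩
    have hli : LinearIndependent ℂ (fun i : {i // d i = μ} => b i) :=
      b.linearIndependent.comp _ Subtype.val_injective
    rw [← hv, finrank_span_eq_card hli, Fintype.card_subtype]
  rw [halg, hgeo]

/-- From an eigenbasis, build the diagonalizing matrix. -/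
private lemma diag_of_eigenbasis (A : Matrix n n ℂ) (b : Module.Basis n ℂ (n → ℂ)) (d : n → ℂ)
    (h : ∀ i, A.mulVecLin (b i) = d i • b i) :
    ∃ (P : Matrix n n ℂ) (d : n → ℂ), IsUnit P.det ∧
      P⁻¹ * A * P = Matrix.diagonal d := by
  classical
  set P : Matrix n n ℂ := (Pi.basisFun ℂ n).toMatrix ⇑b with hP
  haveI : Invertible P := (Pi.basisFun ℂ n).invertibleToMatrix b
  have hdet : IsUnit P.det := Matrix.isUnit_det_of_invertible P
  have hPb : ∀ k i, P k i = b i k := by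
    intro k i
    simp [hP, Module.Basis.toMatrix_apply]
  have hAP : A * P = P * diagonal d := by
    ext j i
    have h1 : (A * P) j i = (A.mulVecLin (b i)) j := by
      simp [Matrix.mul_apply, Matrix.mulVecLin_apply, Matrix.mulVec, dotProduct, hPb]
    rw [h1, h i]
    simp [Matrix.mul_diagonal, hPb, mul_comm]
  refine ⟨P, d, hdet, ?_⟩
  rw [mul_assoc, hAP, ← mul_assoc, Matrix.nonsing_inv_mul P hdet, one_mul]

/-- From a diagonalization, build an eigenbasis. -/
private lemma eigenbasis_of_diag (A : Matrix n n ℂ) (P : Matrix n n ℂ) (d : n → ℂ)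
    (hdet : IsUnit P.det) (hPD : P⁻¹ * A * P = Matrix.diagonal d) :
    ∃ (b : Module.Basis n ℂ (n → ℂ)) (d : n → ℂ), ∀ i, A.mulVecLin (b i) = d i • b i := by
  classical
  have hAP : A * P = P * diagonal d := by
    have h1 : P * (P⁻¹ * A * P) = P * diagonal d := by rw [hPD]
    calc A * P = P * P⁻¹ * A * P := by rw [Matrix.mul_nonsing_inv P hdet, one_mul]
      _ = P * (P⁻¹ * A * P) := by rw [mul_assoc, mul_assoc, mul_assoc]
      _ = P * diagonal d := h1
  haveI : Invertible P := P.invertibleOfIsUnitDet hdet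
  let e : (n → ℂ) ≃ₗ[ℂ] (n → ℂ) :=
    LinearEquiv.ofLinear P.mulVecLin P⁻¹.mulVecLin
      (by rw [← Matrix.mulVecLin_mul, Matrix.mul_nonsing_inv P hdet, Matrix.mulVecLin_one])
      (by rw [← Matrix.mulVecLin_mul, Matrix.nonsing_inv_mul P hdet, Matrix.mulVecLin_one])
  refine ⟨(Pi.basisFun ℂ n).map e, d, fun i => ?_⟩
  have hb : ((Pi.basisFun ℂ n).map e) i = P.mulVec (Pi.single i 1) := by
    simp [Module.Basis.map_apply, e, Matrix.mulVecLin_apply]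
  rw [hb]
  rw [Matrix.mulVecLin_apply, Matrix.mulVec_mulVec, hAP, ← Matrix.mulVec_mulVec,
    Matrix.diagonal_mulVec_single]
  ext j
  simp [Matrix.mulVec_single, mul_comm]

/-- From the multiplicity condition, build an eigenbasis. -/
private lemma eigenbasis_of_mult (A : Matrix n n ℂ)
    (h : ∀ μ : ℂ, (Matrix.charpoly A).rootMultiplicity μ =
        Module.finrank ℂ (Module.End.eigenspace A.mulVecLin μ)) :
    ∃ (b : Module.Basis n ℂ (n → ℂ)) (d : n → ℂ), ∀ i, A.mulVecLin (b i) = d i • b i := by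
  classical
  set f := A.mulVecLin with hf
  have hcharf : f.charpoly = A.charpoly := by
    rw [← toMatrix_mulVecLin A, LinearMap.charpoly_toMatrix]
  have hne : A.charpoly ≠ 0 := A.charpoly_monic.ne_zero
  set S : Finset ℂ := A.charpoly.roots.toFinset with hS
  -- eigenspaces vanish off the roots
  have hbot : ∀ μ : ℂ, μ ∉ S → Module.End.eigenspace f μ = ⊥ := by
    intro μ hμ
    by_contra hb
    have heig : Module.End.HasEigenvalue f μ := hb
    have hroot : (minpoly ℂ f).IsRoot μ := Module.End.hasEigenvalue_iff_isRoot.mp heig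
    have hdvd : minpoly ℂ f ∣ f.charpoly := LinearMap.minpoly_dvd_charpoly f
    have : A.charpoly.IsRoot μ := by
      rw [← hcharf]; exact hroot.dvd hdvd
    exact hμ (Multiset.mem_toFinset.mpr ((mem_roots hne).mpr this))
  -- sum of algebraic multiplicities equals card n
  have hsum : ∑ μ ∈ S, A.charpoly.rootMultiplicity μ = Fintype.card n := by
    have hsplits : A.charpoly.Splits := IsAlgClosed.splits _
    have hcard : A.charpoly.roots.card = A.charpoly.natDegree :=
      splits_iff_card_roots.mp hsplits
    calc ∑ μ ∈ S, A.charpoly.rootMultiplicity μ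
        = ∑ μ ∈ S, A.charpoly.roots.count μ := by
          refine Finset.sum_congr rfl fun μ _ => ?_
          rw [count_roots]
      _ = Multiset.card A.charpoly.roots := Multiset.toFinset_sum_count_eq _
      _ = A.charpoly.natDegree := hcard
      _ = Fintype.card n := A.charpoly_natDegree_eq_dim
  -- supremum of eigenspaces is everything
  have hfr : Module.finrank ℂ ↥(⨆ μ ∈ S, Module.End.eigenspace f μ) = Fintype.card n := by
    rw [finrank_biSup_eq_sum _ (Module.End.eigenspaces_iSupIndep f)]
    rw [← hsum]
    exact Finset.sum_congr rfl fun μ _ => (h μ).symm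
  have hStop : (⨆ μ ∈ S, Module.End.eigenspace f μ) = ⊤ := by
    apply Submodule.eq_top_of_finrank_eq
    rw [hfr, Module.finrank_fintype_fun_eq_card]
  have htop : (⨆ μ : ℂ, Module.End.eigenspace f μ) = ⊤ := by
    apply le_antisymm le_top
    rw [← hStop]
    exact iSup_le fun μ => iSup_le fun _ => le_iSup _ μ
  have hint : DirectSum.IsInternal (fun μ : ℂ => Module.End.eigenspace f μ) :=
    (DirectSum.isInternal_submodule_iff_iSupIndep_and_iSup_eq_top _).mpr
      ⟨Module.End.eigenspaces_iSupIndep f, htop⟩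
  let cb := hint.collectedBasis
    (fun μ => Module.finBasis ℂ (Module.End.eigenspace f μ))
  haveI : Fintype (Σ μ : ℂ, Fin (Module.finrank ℂ (Module.End.eigenspace f μ))) :=
    FiniteDimensional.fintypeBasisIndex cb
  have hcards : Fintype.card (Σ μ : ℂ, Fin (Module.finrank ℂ (Module.End.eigenspace f μ)))
      = Fintype.card n := by
    rw [← Module.finrank_eq_card_basis cb, Module.finrank_fintype_fun_eq_card]
  let e := Fintype.equivOfCardEq hcards
  refine ⟨cb.reindex e, fun i => (e.symm i).1, fun i => ?_⟩
  rw [Module.Basis.reindex_apply]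
  exact Module.End.mem_eigenspace_iff.mp (hint.collectedBasis_mem _ (e.symm i))

end Aux

theorem diagonalizable_iff_algebraic_eq_geometric
    {n : Type*} [Fintype n] [DecidableEq n]
    (A : Matrix n n ℂ) :
    (∃ (P : Matrix n n ℂ) (d : n → ℂ), IsUnit P.det ∧
        P⁻¹ * A * P = Matrix.diagonal d) ↔
    (∀ μ : ℂ, (Matrix.charpoly A).rootMultiplicity μ =
        Module.finrank ℂ (Module.End.eigenspace A.mulVecLin μ)) := by
  constructor
  · rintro ⟨P, d, hdet, hPD⟩
    obtain ⟨b, d', hb⟩ := eigenbasis_of_diag A P d hdet hPD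
    exact mult_of_eigenbasis A b d' hb
  · intro h
    obtain ⟨b, d, hb⟩ := eigenbasis_of_mult A h
    exact diag_of_eigenbasis A b d hb
end
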